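/- arXiv:math/0701814 — 4 statements merged into one kernel-verified Lean document; each statement's English description precedes it below -/
import Mathlib

section
/- Let μ be a nonnegative Borel measure on ℂ finite on compacts, and let z ∈ ℂ with |z| ≥ 1. For R > |z| + 1: ∫_{|w|<R} log⁺|z−w| dμ(w) − ∫_{|w|<R} log⁺|w| dμ(w) = ∫₁^R (μ(B(0,t)) − μ(B(z,t)))/t dt + ∫_{|w|<R, |w−z|≥R} log(|z−w|/R) dμ(w) − ∫_{|w|≥R, |w−z|<R} log(|z−w|/R) dμ(w). -/
open Real Filter MeasureTheory Set


lemma maxlog (a : ℝ) (ha : 0 ≤ a) : max (Real.log a) 0 = Real.log (max a 1) := by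
  rcases le_or_gt a 1 with h | h
  · rw [max_eq_right h, Real.log_one, max_eq_right (Real.log_nonpos ha h)]
  · rw [max_eq_left h.le, max_eq_left (Real.log_nonneg h.le)]

lemma logsplit (a R : ℝ) (ha : 0 ≤ a) (hR : 1 ≤ R) :
    Real.log (max a 1) = Real.log (max 1 (min a R)) + Real.log (max (a / R) 1) := by
  have hR0 : (0:ℝ) < R := lt_of_lt_of_le zero_lt_one hR
  rcases le_or_gt a R with h | h
  · rw [min_eq_left h, max_comm 1 a,
      max_eq_right ((div_le_one hR0).2 h), Real.log_one, add_zero]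
  · rw [min_eq_right h.le, max_eq_left ((one_le_div hR0).2 h.le),
      max_eq_left (hR.trans h.le), max_eq_right hR,
      Real.log_div (ne_of_gt (hR0.trans h)) (ne_of_gt hR0)]
    ring

lemma int_oneDiv (a b : ℝ) (ha : 0 < a) (hb : 0 < b) (hab : a ≤ b) :
    ∫ t in Set.Ioo a b, 1 / t = Real.log (b / a) := by
  rw [← MeasureTheory.integral_Ioc_eq_integral_Ioo,
    ← intervalIntegral.integral_of_le hab, integral_one_div_of_pos ha hb]

lemma Lint1 (c R : ℝ) (hR : 1 ≤ R) :
    ∫ t in Set.Ioc 1 R, (if 1 < t ∧ t < c then 1 / t else 0) =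
      Real.log (max 1 (min c R)) := by
  have hind : (fun t : ℝ => if 1 < t ∧ t < c then 1 / t else 0) =
      Set.indicator (Set.Ioo 1 c) (fun t => 1 / t) := by
    funext t; simp [Set.indicator, Set.mem_Ioo]
  rw [hind, MeasureTheory.setIntegral_indicator measurableSet_Ioo]
  rcases le_or_gt c R with h | h
  · have hs : Set.Ioc 1 R ∩ Set.Ioo 1 c = Set.Ioo 1 c := by
      ext t
      simp only [mem_inter_iff, mem_Ioc, mem_Ioo]
      exact ⟨fun ⟨_, h2⟩ => h2, fun ⟨h1, h2⟩ => ⟨⟨h1, h2.le.trans h⟩, h1, h2⟩⟩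
    rw [hs, min_eq_left h]
    rcases le_or_gt c 1 with h1 | h1
    · rw [Set.Ioo_eq_empty (by linarith), max_eq_left h1]
      simp
    · rw [int_oneDiv 1 c one_pos (by linarith) h1.le, div_one,
        max_eq_right h1.le]
  · have hs : Set.Ioc 1 R ∩ Set.Ioo 1 c = Set.Ioc 1 R := by
      apply Set.inter_eq_left.2
      intro t ht
      exact ⟨ht.1, ht.2.trans_lt h⟩
    rw [hs, min_eq_right h.le, max_eq_right hR,
      MeasureTheory.integral_Ioc_eq_integral_Ioo,
      int_oneDiv 1 R one_pos (by linarith) hR, div_one]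

lemma Lint2 (c R : ℝ) (hR : 1 ≤ R) :
    ∫ t in Set.Ioc 1 R, (if 1 < t ∧ c ≤ t then 1 / t else 0) =
      Real.log R - Real.log (max 1 (min c R)) := by
  have hind : (fun t : ℝ => if 1 < t ∧ c ≤ t then 1 / t else 0) =
      Set.indicator (Set.Ioi 1 ∩ Set.Ici c) (fun t => 1 / t) := by
    funext t; simp [Set.indicator, Set.mem_Ioi, Set.mem_Ici, and_comm]
  rw [hind, MeasureTheory.setIntegral_indicator
    (measurableSet_Ioi.inter measurableSet_Ici)]
  rcases le_or_gt c 1 with h1 | h1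
  · have hs : Set.Ioc 1 R ∩ (Set.Ioi 1 ∩ Set.Ici c) = Set.Ioc 1 R := by
      apply Set.inter_eq_left.2
      intro t ht
      exact ⟨ht.1, h1.trans ht.1.le⟩
    rw [hs, min_eq_left (h1.trans hR), max_eq_left h1, Real.log_one, sub_zero,
      MeasureTheory.integral_Ioc_eq_integral_Ioo,
      int_oneDiv 1 R one_pos (by linarith) hR, div_one]
  · rcases le_or_gt c R with h2 | h2
    · have hs : Set.Ioc 1 R ∩ (Set.Ioi 1 ∩ Set.Ici c) = Set.Icc c R := by
        ext t
        simp only [mem_inter_iff, mem_Ioc, mem_Ioi, mem_Ici, mem_Icc]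
        constructor
        · rintro ⟨⟨_, hb⟩, _, hc⟩; exact ⟨hc, hb⟩
        · rintro ⟨ha, hb⟩; exact ⟨⟨h1.trans_le ha, hb⟩, h1.trans_le ha, ha⟩
      rw [hs, min_eq_left h2, max_eq_right h1.le,
        MeasureTheory.integral_Icc_eq_integral_Ioo,
        int_oneDiv c R (by linarith) (by linarith) h2,
        Real.log_div (by linarith) (by linarith)]
    · have hs : Set.Ioc 1 R ∩ (Set.Ioi 1 ∩ Set.Ici c) = ∅ := by
        ext t
        simp only [mem_inter_iff, mem_Ioc, mem_Ioi, mem_Ici, mem_empty_iff_false,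
          iff_false, not_and]
        rintro ⟨_, hb⟩ _ hc; linarith
      rw [hs, min_eq_right h2.le, max_eq_right hR]
      simp

lemma Lswap (μ : Measure ℂ) (S : Set ℂ) (hS : MeasurableSet S) (hSfin : μ S ≠ ⊤)
    (R : ℝ) (c : ℂ → ℝ) (hc : Measurable c)
    (Q : ℝ → ℝ → Prop) [∀ t x, Decidable (Q t x)]
    (hQ : MeasurableSet {p : ℝ × ℝ | Q p.1 p.2}) :
    ∫ w in S, (∫ t in Set.Ioc 1 R, (if 1 < t ∧ Q t (c w) then 1 / t else 0)) ∂μ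
      = ∫ t in Set.Ioc 1 R, (μ (S ∩ {w | Q t (c w)})).toReal / t := by
  haveI : IsFiniteMeasure (μ.restrict S) :=
    ⟨by rw [Measure.restrict_apply_univ]; exact hSfin.lt_top⟩
  haveI : IsFiniteMeasure (volume.restrict (Set.Ioc (1:ℝ) R)) :=
    ⟨by rw [Measure.restrict_apply_univ]; exact measure_Ioc_lt_top⟩
  set f : ℂ → ℝ → ℝ := fun w t => if 1 < t ∧ Q t (c w) then 1 / t else 0 with hf
  have hmeas : Measurable (Function.uncurry f) := by
    apply Measurable.ite
    · have h1 : MeasurableSet {p : ℂ × ℝ | 1 < p.2} :=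
        measurableSet_lt measurable_const measurable_snd
    
      have h2 : MeasurableSet {p : ℂ × ℝ | Q p.2 (c p.1)} :=
        (measurable_snd.prodMk (hc.comp measurable_fst)) hQ
      exact h1.inter h2
    · exact (measurable_const.div measurable_snd)
    · exact measurable_const
  have hint : Integrable (Function.uncurry f)
      ((μ.restrict S).prod (volume.restrict (Set.Ioc (1:ℝ) R))) := by
    apply Integrable.mono' (integrable_const 1) hmeas.aestronglyMeasurable
    filter_upwards with p
    simp only [Function.uncurry, hf]
    split_ifs with h
    · have h2 : (0:ℝ) < p.2 := lt_trans one_pos h.1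
      rw [Real.norm_eq_abs, abs_of_nonneg (le_of_lt (div_pos one_pos h2)),
        div_le_one h2]
      exact h.1.le
    · simp
  have := MeasureTheory.integral_integral_swap hint
  rw [this]
  apply MeasureTheory.setIntegral_congr_fun measurableSet_Ioc
  intro t ht
  have ht1 : 1 < t := ht.1
  have hQm : MeasurableSet {w : ℂ | Q t (c w)} :=
    (measurable_const.prodMk hc) hQ
  have : (fun w => f w t) = Set.indicator {w : ℂ | Q t (c w)} (fun _ => 1 / t) := by
    funext w
    by_cases h : Q t (c w)
    · simp [hf, h, ht1, Set.indicator, Set.mem_setOf_eq]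
    · simp [hf, h, Set.indicator, Set.mem_setOf_eq]
  simp only [hf]
  rw [show (∫ w in S, (if 1 < t ∧ Q t (c w) then 1 / t else 0) ∂μ)
      = ∫ w in S, Set.indicator {w : ℂ | Q t (c w)} (fun _ => 1 / t) w ∂μ by
    rw [← this],
    MeasureTheory.setIntegral_indicator hQm, MeasureTheory.setIntegral_const,
    smul_eq_mul, mul_one_div, measureReal_def]

lemma intS {α : Type*} [MeasurableSpace α] (μ : Measure α) (S : Set α)
    (hS : MeasurableSet S) (hSfin : μ S ≠ ⊤)
    (g : α → ℝ) (hg : Measurable g) (C : ℝ) (hC : ∀ w ∈ S, |g w| ≤ C) :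
    MeasureTheory.IntegrableOn g S μ := by
  haveI : IsFiniteMeasure (μ.restrict S) :=
    ⟨by rw [Measure.restrict_apply_univ]; exact hSfin.lt_top⟩
  refine Integrable.mono' (integrable_const C) hg.aestronglyMeasurable ?_
  rw [ae_restrict_iff' hS]
  filter_upwards with w hw
  rw [Real.norm_eq_abs]
  exact hC w hw

lemma LemA (μ : Measure ℂ) (S : Set ℂ) (hS : MeasurableSet S) (hSfin : μ S ≠ ⊤)
    (R : ℝ) (hR : 1 ≤ R) (c : ℂ → ℝ) (hc : Measurable c) (hc0 : ∀ w, 0 ≤ c w)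
    (C : ℝ) (hC0 : 0 ≤ C) (hC : ∀ w ∈ S, c w ≤ C) :
    ∫ w in S, Real.log (max (c w) 1) ∂μ
      = (∫ t in Set.Ioc 1 R, (μ (S ∩ {w | t < c w})).toReal / t)
        + ∫ w in S, Real.log (max (c w / R) 1) ∂μ := by
  have hR0 : (0:ℝ) < R := lt_of_lt_of_le one_pos hR
  have hsplit : Set.EqOn (fun w => Real.log (max (c w) 1))
      (fun w => Real.log (max 1 (min (c w) R)) + Real.log (max (c w / R) 1)) S :=
    fun w _ => logsplit (c w) R (hc0 w) hR
  rw [MeasureTheory.setIntegral_congr_fun hS hsplit]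
  have hm1 : Measurable fun w => Real.log (max 1 (min (c w) R)) :=
    Real.measurable_log.comp (measurable_const.max (hc.min measurable_const))
  have hm2 : Measurable fun w => Real.log (max (c w / R) 1) :=
    Real.measurable_log.comp ((hc.div measurable_const).max measurable_const)
  have hi1 : MeasureTheory.IntegrableOn
      (fun w => Real.log (max 1 (min (c w) R))) S μ := by
    refine intS μ S hS hSfin _ hm1 (Real.log R) (fun w _ => ?_)
    rw [abs_of_nonneg (Real.log_nonneg (le_max_left _ _))]
    exact Real.log_le_log (lt_of_lt_of_le one_pos (le_max_left _ _))
      (max_le hR (min_le_right _ _))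
  have hi2 : MeasureTheory.IntegrableOn
      (fun w => Real.log (max (c w / R) 1)) S μ := by
    refine intS μ S hS hSfin _ hm2 (Real.log (max (C / R) 1)) (fun w hw => ?_)
    rw [abs_of_nonneg (Real.log_nonneg (le_max_right _ _))]
    exact Real.log_le_log (lt_of_lt_of_le one_pos (le_max_right _ _))
      (max_le_max (div_le_div_of_nonneg_right (hC w hw) hR0.le) (le_refl 1))
  rw [MeasureTheory.integral_add hi1 hi2]
  congr 1
  rw [← Lswap μ S hS hSfin R c hc (fun t x => t < x)
    (measurableSet_lt measurable_fst measurable_snd)]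
  exact MeasureTheory.setIntegral_congr_fun hS
    (fun w _ => (Lint1 (c w) R hR).symm)

lemma LemA2 (μ : Measure ℂ) (S : Set ℂ) (hS : MeasurableSet S) (hSfin : μ S ≠ ⊤)
    (R : ℝ) (hR : 1 ≤ R) (c : ℂ → ℝ) (hc : Measurable c) :
    (∫ t in Set.Ioc 1 R, (μ (S ∩ {w | c w ≤ t})).toReal / t)
      = ∫ w in S, (Real.log R - Real.log (max 1 (min (c w) R))) ∂μ := by
  rw [← Lswap μ S hS hSfin R c hc (fun t x => x ≤ t)
    (measurableSet_le measurable_snd measurable_fst)]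
  exact (MeasureTheory.setIntegral_congr_fun hS
    (fun w _ => Lint2 (c w) R hR))

/-- The exact decomposition of `∫_{|w|<R} (log⁺|z-w| - log⁺|w|) dμ(w)` into the
main term `∫₁^R (μ(B(0,t)) - μ(B(z,t)))/t dt` and two boundary integrals. -/
theorem stmt8 (μ : Measure ℂ) [IsFiniteMeasureOnCompacts μ] (z : ℂ)
    (hz : 1 ≤ ‖z‖) (R : ℝ) (hR : ‖z‖ + 1 < R) :
    (∫ w in {w : ℂ | ‖w‖ < R}, max (Real.log (‖z - w‖)) 0 ∂μ)
      - ∫ w in {w : ℂ | ‖w‖ < R}, max (Real.log (‖w‖)) 0 ∂μ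
    = (∫ t in Set.Ioc (1:ℝ) R,
        ((μ (Metric.closedBall 0 t)).toReal - (μ (Metric.closedBall z t)).toReal) / t)
      + (∫ w in {w : ℂ | ‖w‖ < R ∧ R ≤ ‖w - z‖},
          Real.log (‖z - w‖ / R) ∂μ)
      - ∫ w in {w : ℂ | R ≤ ‖w‖ ∧ ‖w - z‖ < R},
          Real.log (‖z - w‖ / R) ∂μ := by
  have hza : (0:ℝ) ≤ ‖z‖ := norm_nonneg z
  have hR1 : (1:ℝ) ≤ R := by linarith
  have hR0 : (0:ℝ) < R := by linarith
  have hc1 : Measurable fun w : ℂ => ‖z - w‖ :=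
    (continuous_norm.comp (continuous_const.sub continuous_id)).measurable
  have hc2 : Measurable fun w : ℂ => ‖w‖ := continuous_norm.measurable
  have hc3 : Measurable fun w : ℂ => ‖w - z‖ :=
    (continuous_norm.comp (continuous_id.sub continuous_const)).measurable
  set S : Set ℂ := {w : ℂ | ‖w‖ < R} with hSdef
  have hS : MeasurableSet S := measurableSet_lt hc2 measurable_const
  have hSsub : S ⊆ Metric.closedBall 0 R := by
    intro w hw
    rw [Metric.mem_closedBall, Complex.dist_eq, sub_zero]
    exact le_of_lt hw
  have hSfin : μ S ≠ ⊤ :=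
    ((measure_mono hSsub).trans_lt (isCompact_closedBall (0:ℂ) R).measure_lt_top).ne
  set S' : Set ℂ := {w : ℂ | R ≤ ‖w‖} ∩ Metric.closedBall z R with hS'def
  have hS'm : MeasurableSet S' :=
    (measurableSet_le measurable_const hc2).inter measurableSet_closedBall
  have hS'fin : μ S' ≠ ⊤ :=
    ((measure_mono Set.inter_subset_right).trans_lt
      (isCompact_closedBall z R).measure_lt_top).ne
  -- rewrite log⁺ as log of max
  have hL1 : (∫ w in S, max (Real.log (‖z - w‖)) 0 ∂μ)
      = ∫ w in S, Real.log (max (‖z - w‖) 1) ∂μ :=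
    MeasureTheory.setIntegral_congr_fun hS (fun w _ => maxlog _ (norm_nonneg _))
  have hL2 : (∫ w in S, max (Real.log (‖w‖)) 0 ∂μ)
      = ∫ w in S, Real.log (max (‖w‖) 1) ∂μ :=
    MeasureTheory.setIntegral_congr_fun hS (fun w _ => maxlog _ (norm_nonneg _))
  -- apply the layer-cake decomposition
  have E1 := LemA μ S hS hSfin R hR1 (fun w => ‖z - w‖) hc1
    (fun w => norm_nonneg _) (‖z‖ + R) (by positivity)
    (fun w hw => le_trans (norm_sub_le z w)
      (by exact add_le_add_right (le_of_lt (show ‖w‖ < R from hw)) _))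
  have E2 := LemA μ S hS hSfin R hR1 (fun w => ‖w‖) hc2
    (fun w => norm_nonneg _) R (le_of_lt hR0)
    (fun w hw => le_of_lt hw)
  have E2zero : (∫ w in S, Real.log (max (‖w‖ / R) 1) ∂μ) = 0 := by
    rw [MeasureTheory.setIntegral_congr_fun hS (g := fun _ => (0:ℝ))
      (fun w hw => by
        rw [max_eq_right ((div_le_one hR0).2 (le_of_lt hw)), Real.log_one])]
    simp
  -- identify the second boundary term
  have hset2m : MeasurableSet {w : ℂ | ‖w‖ < R ∧ R ≤ ‖w - z‖} :=
    (measurableSet_lt hc2 measurable_const).inter (measurableSet_le measurable_const hc3)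
  have T2eq : (∫ w in S, Real.log (max (‖z - w‖ / R) 1) ∂μ)
      = ∫ w in {w : ℂ | ‖w‖ < R ∧ R ≤ ‖w - z‖},
          Real.log (‖z - w‖ / R) ∂μ := by
    rw [← MeasureTheory.integral_indicator hS, ← MeasureTheory.integral_indicator hset2m]
    congr 1
    funext w
    by_cases hw : w ∈ S
    · by_cases hw2 : R ≤ ‖w - z‖
      · have hmem : w ∈ {w : ℂ | ‖w‖ < R ∧ R ≤ ‖w - z‖} := ⟨hw, hw2⟩
        rw [Set.indicator_of_mem hw, Set.indicator_of_mem hmem]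
        rw [max_eq_left ((one_le_div hR0).2
          (by rw [norm_sub_rev z w]; exact hw2))]
      · have hmem : w ∉ {w : ℂ | ‖w‖ < R ∧ R ≤ ‖w - z‖} := fun h => hw2 h.2
        rw [Set.indicator_of_mem hw, Set.indicator_of_notMem hmem]
        rw [max_eq_right ((div_le_one hR0).2
          (le_of_lt (by rw [norm_sub_rev z w]; exact not_le.1 hw2))),
          Real.log_one]
    · have hmem : w ∉ {w : ℂ | ‖w‖ < R ∧ R ≤ ‖w - z‖} := fun h => hw h.1
      rw [Set.indicator_of_notMem hw, Set.indicator_of_notMem hmem]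
  -- names for the radial functions
  set fa : ℝ → ℝ := fun t => (μ (S ∩ {w | t < ‖z - w‖})).toReal with hfadef
  set fb : ℝ → ℝ := fun t => (μ (S ∩ {w | t < ‖w‖})).toReal with hfbdef
  set fc : ℝ → ℝ := fun t => (μ (S' ∩ {w | ‖w - z‖ ≤ t})).toReal with hfcdef
  set f0 : ℝ → ℝ := fun t => (μ (Metric.closedBall (0:ℂ) t)).toReal with hf0def
  set fz : ℝ → ℝ := fun t => (μ (Metric.closedBall z t)).toReal with hfzdef
  have hfa_anti : Antitone fa := fun s t hst =>
    ENNReal.toReal_mono (ne_top_of_le_ne_top hSfin (measure_mono Set.inter_subset_left))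
      (measure_mono (fun w hw => ⟨hw.1, lt_of_le_of_lt hst hw.2⟩))
  have hfb_anti : Antitone fb := fun s t hst =>
    ENNReal.toReal_mono (ne_top_of_le_ne_top hSfin (measure_mono Set.inter_subset_left))
      (measure_mono (fun w hw => ⟨hw.1, lt_of_le_of_lt hst hw.2⟩))
  have hfc_mono : Monotone fc := fun s t hst =>
    ENNReal.toReal_mono (ne_top_of_le_ne_top hS'fin (measure_mono Set.inter_subset_left))
      (measure_mono (fun w hw => ⟨hw.1, hw.2.trans hst⟩))
  have hf0_mono : Monotone f0 := fun s t hst =>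
    ENNReal.toReal_mono (isCompact_closedBall (0:ℂ) t).measure_lt_top.ne
      (measure_mono (Metric.closedBall_subset_closedBall hst))
  have hfz_mono : Monotone fz := fun s t hst =>
    ENNReal.toReal_mono (isCompact_closedBall z t).measure_lt_top.ne
      (measure_mono (Metric.closedBall_subset_closedBall hst))
  -- integrability of the four radial integrands
  have hia : MeasureTheory.IntegrableOn (fun t => fa t / t) (Set.Ioc 1 R) volume := by
    refine intS volume _ measurableSet_Ioc measure_Ioc_lt_top.ne _
      (hfa_anti.measurable.div measurable_id) ((μ S).toReal) (fun t ht => ?_)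
    rw [abs_of_nonneg (div_nonneg ENNReal.toReal_nonneg (by linarith [ht.1]))]
    exact le_trans (div_le_self ENNReal.toReal_nonneg ht.1.le)
      (ENNReal.toReal_mono hSfin (measure_mono Set.inter_subset_left))
  have hib : MeasureTheory.IntegrableOn (fun t => fb t / t) (Set.Ioc 1 R) volume := by
    refine intS volume _ measurableSet_Ioc measure_Ioc_lt_top.ne _
      (hfb_anti.measurable.div measurable_id) ((μ S).toReal) (fun t ht => ?_)
    rw [abs_of_nonneg (div_nonneg ENNReal.toReal_nonneg (by linarith [ht.1]))]
    exact le_trans (div_le_self ENNReal.toReal_nonneg ht.1.le)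
      (ENNReal.toReal_mono hSfin (measure_mono Set.inter_subset_left))
  have hic : MeasureTheory.IntegrableOn (fun t => fc t / t) (Set.Ioc 1 R) volume := by
    refine intS volume _ measurableSet_Ioc measure_Ioc_lt_top.ne _
      (hfc_mono.measurable.div measurable_id) ((μ S').toReal) (fun t ht => ?_)
    rw [abs_of_nonneg (div_nonneg ENNReal.toReal_nonneg (by linarith [ht.1]))]
    exact le_trans (div_le_self ENNReal.toReal_nonneg ht.1.le)
      (ENNReal.toReal_mono hS'fin (measure_mono Set.inter_subset_left))
  have him : MeasureTheory.IntegrableOn (fun t => (f0 t - fz t) / t) (Set.Ioc 1 R) volume := by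
    refine intS volume _ measurableSet_Ioc measure_Ioc_lt_top.ne _
      ((hf0_mono.measurable.sub hfz_mono.measurable).div measurable_id)
      (f0 R + fz R) (fun t ht => ?_)
    have h1 : |f0 t - fz t| ≤ f0 R + fz R := by
      have b1 : f0 t ≤ f0 R := hf0_mono ht.2
      have b2 : fz t ≤ fz R := hfz_mono ht.2
      have b3 : (0:ℝ) ≤ f0 t := ENNReal.toReal_nonneg
      have b4 : (0:ℝ) ≤ fz t := ENNReal.toReal_nonneg
      rw [abs_le]; constructor <;> [linarith; linarith]
    rw [abs_div, abs_of_nonneg (by linarith [ht.1] : (0:ℝ) ≤ t)]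
    exact le_trans (div_le_self (abs_nonneg _) ht.1.le) h1
  -- pointwise identity on Ioo 1 R
  have key : ∀ t ∈ Set.Ioo (1:ℝ) R, fa t / t - fb t / t = (f0 t - fz t) / t + fc t / t := by
    intro t ht
    have ht0 : (0:ℝ) < t := lt_trans one_pos ht.1
    -- e1 : split S by t < |z - w|
    have u1 : (S ∩ {w | t < ‖z - w‖}) ∪ (S ∩ {w | ‖z - w‖ ≤ t}) = S := by
      have : {w : ℂ | t < ‖z - w‖} ∪ {w : ℂ | ‖z - w‖ ≤ t} = Set.univ := by
        ext w; simp [lt_or_ge]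
      rw [← Set.inter_union_distrib_left, this, Set.inter_univ]
    have d1 : Disjoint (S ∩ {w | t < ‖z - w‖}) (S ∩ {w | ‖z - w‖ ≤ t}) := by
      rw [Set.disjoint_left]
      rintro w ⟨_, h1⟩ ⟨_, h2⟩
      simp only [Set.mem_setOf_eq] at h1 h2
      exact absurd h2 (not_le.2 h1)
    have fin1 : μ (S ∩ {w | t < ‖z - w‖}) ≠ ⊤ :=
      ne_top_of_le_ne_top hSfin (measure_mono Set.inter_subset_left)
    have fin1' : μ (S ∩ {w | ‖z - w‖ ≤ t}) ≠ ⊤ :=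
      ne_top_of_le_ne_top hSfin (measure_mono Set.inter_subset_left)
    have e1 : fa t + (μ (S ∩ {w | ‖z - w‖ ≤ t})).toReal = (μ S).toReal := by
      simp only [hfadef]
      rw [← ENNReal.toReal_add fin1 fin1',
        ← measure_union d1 (hS.inter (measurableSet_le hc1 measurable_const)), u1]
    -- e2 : split S by t < |w|
    have u2 : (S ∩ {w | t < ‖w‖}) ∪ (S ∩ {w | ‖w‖ ≤ t}) = S := by
      have : {w : ℂ | t < ‖w‖} ∪ {w : ℂ | ‖w‖ ≤ t} = Set.univ := by
        ext w; simp [lt_or_ge]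
      rw [← Set.inter_union_distrib_left, this, Set.inter_univ]
    have d2 : Disjoint (S ∩ {w | t < ‖w‖}) (S ∩ {w | ‖w‖ ≤ t}) := by
      rw [Set.disjoint_left]
      rintro w ⟨_, h1⟩ ⟨_, h2⟩
      simp only [Set.mem_setOf_eq] at h1 h2
      exact absurd h2 (not_le.2 h1)
    have fin2 : μ (S ∩ {w | t < ‖w‖}) ≠ ⊤ :=
      ne_top_of_le_ne_top hSfin (measure_mono Set.inter_subset_left)
    have fin2' : μ (S ∩ {w | ‖w‖ ≤ t}) ≠ ⊤ :=
      ne_top_of_le_ne_top hSfin (measure_mono Set.inter_subset_left)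
    have hB' : S ∩ {w : ℂ | ‖w‖ ≤ t} = Metric.closedBall (0:ℂ) t := by
      ext w
      simp only [Set.mem_inter_iff, Set.mem_setOf_eq, Metric.mem_closedBall,
        Complex.dist_eq, sub_zero, hSdef]
      exact ⟨fun h => h.2, fun h => ⟨lt_of_le_of_lt h ht.2, h⟩⟩
    have e2 : fb t + f0 t = (μ S).toReal := by
      simp only [hfbdef, hf0def]
      rw [← hB', ← ENNReal.toReal_add fin2 fin2',
        ← measure_union d2 (hS.inter (measurableSet_le hc2 measurable_const)), u2]
    -- e3 : split closedBall z t by |w| < R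
    have u3 : (S ∩ {w | ‖z - w‖ ≤ t}) ∪ (S' ∩ {w | ‖w - z‖ ≤ t})
        = Metric.closedBall z t := by
      ext w
      simp only [Set.mem_union, Set.mem_inter_iff, Set.mem_setOf_eq, Metric.mem_closedBall,
        Complex.dist_eq, hSdef, hS'def]
      constructor
      · rintro (⟨_, h2⟩ | ⟨_, h2⟩)
        · rwa [norm_sub_rev z w] at h2
        · exact h2
      · intro h
        rcases lt_or_ge (‖w‖) R with hw | hw
        · exact Or.inl ⟨hw, by rwa [norm_sub_rev z w]⟩
        · exact Or.inr ⟨⟨hw, le_trans h ht.2.le⟩, h⟩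
    have d3 : Disjoint (S ∩ {w | ‖z - w‖ ≤ t}) (S' ∩ {w | ‖w - z‖ ≤ t}) := by
      rw [Set.disjoint_left]
      rintro w ⟨h1, _⟩ ⟨⟨h2, _⟩, _⟩
      simp only [hSdef, Set.mem_setOf_eq] at h1 h2
      exact absurd h2 (not_le.2 h1)
    have fin3' : μ (S' ∩ {w | ‖w - z‖ ≤ t}) ≠ ⊤ :=
      ne_top_of_le_ne_top hS'fin (measure_mono Set.inter_subset_left)
    have e3 : (μ (S ∩ {w | ‖z - w‖ ≤ t})).toReal + fc t = fz t := by
      simp only [hfcdef, hfzdef]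
      rw [← ENNReal.toReal_add fin1' fin3',
        ← measure_union d3 (hS'm.inter (measurableSet_le hc3 measurable_const)), u3]
    have hnum : fa t - fb t = (f0 t - fz t) + fc t := by linarith
    rw [div_sub_div_same, ← add_div, hnum]
  -- combine the radial integrals
  have C1 : (∫ t in Set.Ioc (1:ℝ) R, fa t / t) - (∫ t in Set.Ioc (1:ℝ) R, fb t / t)
      = (∫ t in Set.Ioc (1:ℝ) R, (f0 t - fz t) / t) + ∫ t in Set.Ioc (1:ℝ) R, fc t / t := by
    rw [← MeasureTheory.integral_sub hia hib, ← MeasureTheory.integral_add him hic,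
      MeasureTheory.integral_Ioc_eq_integral_Ioo,
      MeasureTheory.integral_Ioc_eq_integral_Ioo (f := fun t => (f0 t - fz t) / t + fc t / t)]
    exact MeasureTheory.setIntegral_congr_fun measurableSet_Ioo (fun t ht => key t ht)
  -- identify the third boundary term
  have hset3m : MeasurableSet {w : ℂ | R ≤ ‖w‖ ∧ ‖w - z‖ < R} :=
    (measurableSet_le measurable_const hc2).inter (measurableSet_lt hc3 measurable_const)
  have C2 : (∫ t in Set.Ioc (1:ℝ) R, fc t / t)
      = - ∫ w in {w : ℂ | R ≤ ‖w‖ ∧ ‖w - z‖ < R},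
          Real.log (‖z - w‖ / R) ∂μ := by
    simp only [hfcdef]
    rw [LemA2 μ S' hS'm hS'fin R hR1 (fun w => ‖w - z‖) hc3]
    have hcongr : Set.EqOn
        (fun w => Real.log R - Real.log (max 1 (min (‖w - z‖) R)))
        (fun w => - Real.log (‖z - w‖ / R)) S' := by
      intro w hw
      have h1 : R ≤ ‖w‖ := hw.1
      have h2 : ‖w - z‖ ≤ R := by
        have := hw.2
        rwa [Metric.mem_closedBall, Complex.dist_eq] at this
      have h3 : (1:ℝ) < ‖w - z‖ := by
        have := norm_sub_norm_le w z
        linarith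
      simp only
      rw [min_eq_left h2, max_eq_right h3.le, norm_sub_rev z w,
        Real.log_div (by linarith) (ne_of_gt hR0)]
      ring
    rw [MeasureTheory.setIntegral_congr_fun hS'm hcongr, MeasureTheory.integral_neg]
    congr 1
    rw [← MeasureTheory.integral_indicator hS'm, ← MeasureTheory.integral_indicator hset3m]
    congr 1
    funext w
    by_cases hw : w ∈ S'
    · by_cases hw3 : ‖w - z‖ < R
      · have hmem : w ∈ {w : ℂ | R ≤ ‖w‖ ∧ ‖w - z‖ < R} := ⟨hw.1, hw3⟩
        rw [Set.indicator_of_mem hw, Set.indicator_of_mem hmem]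
      · have heq : ‖w - z‖ = R := by
          have := hw.2
          rw [Metric.mem_closedBall, Complex.dist_eq] at this
          exact le_antisymm this (not_lt.1 hw3)
        have hmem : w ∉ {w : ℂ | R ≤ ‖w‖ ∧ ‖w - z‖ < R} :=
          fun h => hw3 h.2
        rw [Set.indicator_of_mem hw, Set.indicator_of_notMem hmem,
          norm_sub_rev z w, heq, div_self (ne_of_gt hR0), Real.log_one]
    · have hmem : w ∉ {w : ℂ | R ≤ ‖w‖ ∧ ‖w - z‖ < R} :=
        fun h => hw ⟨h.1, by rw [Metric.mem_closedBall, Complex.dist_eq]; exact h.2.le⟩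
      rw [Set.indicator_of_notMem hw, Set.indicator_of_notMem hmem]
  -- final assembly
  beta_reduce at E1 E2
  rw [hL1, hL2, E1, E2, E2zero, T2eq, add_zero]
  linarith [C1, C2]
end

section
/- Let μ be a nonnegative Borel measure on ℂ invariant under translation by 1 with μ({z : 0 ≤ Re z < 1}) < ∞. Then μ(B(0, r+1)) − μ(B(0, r)) = o(r) as r → ∞, where B(0,r) is the closed disc of radius r. -/
open Real Filter MeasureTheory Asymptotics
open scoped ENNReal Topology

lemma hmeas_add (c : ℂ) : Measurable fun z : ℂ => z + c := measurable_add_const c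

lemma map_int (μ : Measure ℂ) (hinv : Measure.map (fun z : ℂ => z + 1) μ = μ) :
    ∀ n : ℤ, Measure.map (fun z : ℂ => z + (n : ℂ)) μ = μ := by
  have hneg : Measure.map (fun z : ℂ => z + (-1 : ℂ)) μ = μ := by
    conv_lhs => rw [← hinv]
    rw [Measure.map_map (hmeas_add _) (hmeas_add _)]
    have : ((fun z : ℂ => z + (-1)) ∘ fun z : ℂ => z + 1) = id := by
      funext z; simp
    rw [this, Measure.map_id]
  intro n
  induction n using Int.induction_on with
  | zero => simp [Measure.map_id]
  | succ k ih =>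
      have : (fun z : ℂ => z + ((k : ℤ) + 1 : ℤ)) = (fun z : ℂ => z + 1) ∘ fun z : ℂ => z + ((k:ℤ) : ℂ) := by
        funext z; simp [Function.comp]; push_cast; ring
      rw [this, ← Measure.map_map (hmeas_add _) (hmeas_add _), ih, hinv]
  | pred k ih =>
      have : (fun z : ℂ => z + ((-(k:ℤ) - 1 : ℤ))) = (fun z : ℂ => z + (-1 : ℂ)) ∘ fun z : ℂ => z + ((-(k:ℤ) : ℤ) : ℂ) := by
        funext z; simp [Function.comp]; push_cast; ring
      rw [this, ← Measure.map_map (hmeas_add _) (hmeas_add _), ih, hneg]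

lemma preimage_int (μ : Measure ℂ) (hinv : Measure.map (fun z : ℂ => z + 1) μ = μ)
    (n : ℤ) {E : Set ℂ} (hE : MeasurableSet E) :
    μ ((fun z : ℂ => z + (n : ℂ)) ⁻¹' E) = μ E := by
  conv_rhs => rw [← map_int μ hinv n]
  rw [Measure.map_apply (hmeas_add _) hE]

lemma measE (T : Set ℝ) (hT : MeasurableSet T) :
    MeasurableSet {z : ℂ | 0 ≤ z.re ∧ z.re < 1 ∧ z.im ∈ T} := by
  apply MeasurableSet.inter
  · exact measurableSet_le measurable_const Complex.measurable_re
  apply MeasurableSet.inter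
  · exact measurableSet_lt Complex.measurable_re measurable_const
  · exact Complex.measurable_im hT

lemma strip_bound (μ : Measure ℂ) (hinv : Measure.map (fun z : ℂ => z + 1) μ = μ)
    (T : Set ℝ) (hT : MeasurableSet T) :
    ∀ (m : ℕ) (k : ℤ), μ {z : ℂ | (k : ℝ) ≤ z.re ∧ z.re < (k : ℝ) + m ∧ z.im ∈ T}
      ≤ m * μ {z : ℂ | 0 ≤ z.re ∧ z.re < 1 ∧ z.im ∈ T} := by
  intro m
  induction m with
  | zero =>
      intro k
      have : {z : ℂ | (k : ℝ) ≤ z.re ∧ z.re < (k : ℝ) ∧ z.im ∈ T} = ∅ := by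
        ext z; simp only [Set.mem_setOf_eq, Set.mem_empty_iff_false, iff_false]
        rintro ⟨h1, h2, -⟩; linarith
      simp [this]
  | succ m ih =>
      intro k
      have hsub : {z : ℂ | (k : ℝ) ≤ z.re ∧ z.re < (k : ℝ) + (m+1 : ℕ) ∧ z.im ∈ T}
          ⊆ {z : ℂ | (k : ℝ) ≤ z.re ∧ z.re < (k : ℝ) + m ∧ z.im ∈ T}
            ∪ ((fun z : ℂ => z + ((-(k + m) : ℤ) : ℂ)) ⁻¹' {z : ℂ | 0 ≤ z.re ∧ z.re < 1 ∧ z.im ∈ T}) := by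
        rintro z ⟨h1, h2, h3⟩
        by_cases h : z.re < (k : ℝ) + m
        · exact Or.inl ⟨h1, h, h3⟩
        · right
          simp only [Set.mem_preimage, Set.mem_setOf_eq, Complex.add_re, Complex.add_im,
            Complex.intCast_re, Complex.intCast_im]
          push_cast
          push_cast [Nat.cast_succ] at h2
          refine ⟨by linarith [not_lt.mp h], by linarith, by simpa using h3⟩
      calc μ _ ≤ _ := measure_mono hsub
        _ ≤ μ {z : ℂ | (k : ℝ) ≤ z.re ∧ z.re < (k : ℝ) + m ∧ z.im ∈ T}
            + μ ((fun z : ℂ => z + ((-(k + m) : ℤ) : ℂ)) ⁻¹' {z : ℂ | 0 ≤ z.re ∧ z.re < 1 ∧ z.im ∈ T}) :=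
          measure_union_le _ _
        _ ≤ m * μ {z : ℂ | 0 ≤ z.re ∧ z.re < 1 ∧ z.im ∈ T}
            + μ {z : ℂ | 0 ≤ z.re ∧ z.re < 1 ∧ z.im ∈ T} := by
          exact add_le_add (ih k) (le_of_eq (preimage_int μ hinv _ (measE T hT)))
        _ = (m + 1 : ℕ) * μ {z : ℂ | 0 ≤ z.re ∧ z.re < 1 ∧ z.im ∈ T} := by
          push_cast; ring

lemma cover (μ : Measure ℂ) (hinv : Measure.map (fun z : ℂ => z + 1) μ = μ)
    (a b : ℝ) (T : Set ℝ) (hT : MeasurableSet T) :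
    μ {z : ℂ | a ≤ z.re ∧ z.re ≤ b ∧ z.im ∈ T}
      ≤ ENNReal.ofReal (b - a + 3) * μ {z : ℂ | 0 ≤ z.re ∧ z.re < 1 ∧ z.im ∈ T} := by
  rcases le_or_gt a b with hab | hab
  · have hsub : {z : ℂ | a ≤ z.re ∧ z.re ≤ b ∧ z.im ∈ T}
        ⊆ {z : ℂ | ((⌊a⌋ : ℝ)) ≤ z.re ∧ z.re < (⌊a⌋ : ℝ) + (⌈b - a⌉₊ + 2 : ℕ) ∧ z.im ∈ T} := by
      rintro z ⟨h1, h2, h3⟩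
      refine ⟨le_trans (Int.floor_le a) h1, ?_, h3⟩
      have h4 : (b - a : ℝ) ≤ ⌈b - a⌉₊ := Nat.le_ceil _
      have h5 : a - 1 < ⌊a⌋ := Int.sub_one_lt_floor a
      push_cast; linarith
    calc μ _ ≤ _ := measure_mono hsub
      _ ≤ (⌈b - a⌉₊ + 2 : ℕ) * μ {z : ℂ | 0 ≤ z.re ∧ z.re < 1 ∧ z.im ∈ T} :=
          strip_bound μ hinv T hT _ _
      _ ≤ ENNReal.ofReal (b - a + 3) * μ {z : ℂ | 0 ≤ z.re ∧ z.re < 1 ∧ z.im ∈ T} := by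
          gcongr
          have h6 : (⌈b - a⌉₊ : ℝ) < (b - a) + 1 := Nat.ceil_lt_add_one (by linarith)
          rw [show ((⌈b - a⌉₊ + 2 : ℕ) : ℝ≥0∞) = ENNReal.ofReal ((⌈b - a⌉₊ + 2 : ℕ) : ℝ) by
            rw [ENNReal.ofReal_natCast]]
          apply ENNReal.ofReal_le_ofReal
          push_cast; linarith
  · have : {z : ℂ | a ≤ z.re ∧ z.re ≤ b ∧ z.im ∈ T} = ∅ := by
      ext z; simp only [Set.mem_setOf_eq, Set.mem_empty_iff_false, iff_false]
      rintro ⟨h1, h2, -⟩; linarith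
    simp [this]

lemma strip_subset (c : ℝ) : {z : ℂ | 0 ≤ z.re ∧ z.re < 1 ∧ z.im ∈ {t : ℝ | c < |t|}}
    ⊆ {z : ℂ | 0 ≤ z.re ∧ z.re < 1} := fun z hz => ⟨hz.1, hz.2.1⟩

lemma gtend (μ : Measure ℂ) (hfin : μ {z : ℂ | 0 ≤ z.re ∧ z.re < 1} ≠ ⊤) :
    Tendsto (fun c : ℝ => (μ {z : ℂ | 0 ≤ z.re ∧ z.re < 1 ∧ z.im ∈ {t : ℝ | c < |t|}}).toReal)
      atTop (𝓝 0) := by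
  have hs : ∀ c : ℝ, MeasurableSet {z : ℂ | 0 ≤ z.re ∧ z.re < 1 ∧ z.im ∈ {t : ℝ | c < |t|}} :=
    fun c => measE _ (measurableSet_lt measurable_const (measurable_abs))
  have hm : Antitone (fun c : ℝ => {z : ℂ | 0 ≤ z.re ∧ z.re < 1 ∧ z.im ∈ {t : ℝ | c < |t|}}) := by
    intro c c' h z hz
    exact ⟨hz.1, hz.2.1, lt_of_le_of_lt h hz.2.2⟩
  have hf : ∃ c : ℝ, μ {z : ℂ | 0 ≤ z.re ∧ z.re < 1 ∧ z.im ∈ {t : ℝ | c < |t|}} ≠ ⊤ :=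
    ⟨0, fun h => hfin (top_le_iff.mp (h ▸ measure_mono (strip_subset 0)))⟩
  have key := tendsto_measure_iInter_atTop (μ := μ)
    (fun c => (hs c).nullMeasurableSet) hm hf
  have hempty : ⋂ c : ℝ, {z : ℂ | 0 ≤ z.re ∧ z.re < 1 ∧ z.im ∈ {t : ℝ | c < |t|}} = ∅ := by
    rw [Set.eq_empty_iff_forall_notMem]
    intro z hz
    have h2 : |z.im| < |z.im| := (Set.mem_iInter.mp hz (|z.im|)).2.2
    exact lt_irrefl _ h2
  rw [hempty, measure_empty] at key
  have := (ENNReal.tendsto_toReal (by simp : (0:ENNReal) ≠ ⊤)).comp key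
  exact this

lemma ball_fin (μ : Measure ℂ) (hinv : Measure.map (fun z : ℂ => z + 1) μ = μ)
    (hfin : μ {z : ℂ | 0 ≤ z.re ∧ z.re < 1} ≠ ⊤) (r : ℝ) :
    μ (Metric.closedBall 0 r) ≠ ⊤ := by
  have hsub : Metric.closedBall (0:ℂ) r ⊆ {z : ℂ | -r ≤ z.re ∧ z.re ≤ r ∧ z.im ∈ (Set.univ : Set ℝ)} := by
    intro z hz
    rw [Metric.mem_closedBall, dist_zero_right] at hz
    have h1 : |z.re| ≤ ‖z‖ := by exact Complex.abs_re_le_norm z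
    have h2 := abs_le.mp (le_trans h1 hz)
    exact ⟨h2.1, h2.2, Set.mem_univ _⟩
  have heq : {z : ℂ | 0 ≤ z.re ∧ z.re < 1 ∧ z.im ∈ (Set.univ : Set ℝ)}
      = {z : ℂ | 0 ≤ z.re ∧ z.re < 1} := by ext z; simp
  have := le_trans (measure_mono hsub) (cover μ hinv (-r) r Set.univ MeasurableSet.univ)
  rw [heq] at this
  exact ne_top_of_le_ne_top (ENNReal.mul_ne_top ENNReal.ofReal_ne_top hfin) this

lemma ann_bound (μ : Measure ℂ) (hinv : Measure.map (fun z : ℂ => z + 1) μ = μ)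
    {δ r : ℝ} (hδ0 : 0 < δ) (hδ1 : δ ≤ 1) (hr : 0 ≤ r) :
    μ (Metric.closedBall 0 (r+1) \ Metric.closedBall 0 r)
      ≤ ENNReal.ofReal (2*r+5) * μ {z : ℂ | 0 ≤ z.re ∧ z.re < 1 ∧ z.im ∈ {t : ℝ | r*δ < |t|}}
        + ENNReal.ofReal (2*(r*δ)+8) * μ {z : ℂ | 0 ≤ z.re ∧ z.re < 1} := by
  have heq : {z : ℂ | 0 ≤ z.re ∧ z.re < 1 ∧ z.im ∈ (Set.univ : Set ℝ)}
      = {z : ℂ | 0 ≤ z.re ∧ z.re < 1} := by ext z; simp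
  have hsub : Metric.closedBall (0:ℂ) (r+1) \ Metric.closedBall 0 r
      ⊆ {z : ℂ | -(r+1) ≤ z.re ∧ z.re ≤ r+1 ∧ z.im ∈ {t : ℝ | r*δ < |t|}}
        ∪ ({z : ℂ | r*(1-δ) ≤ z.re ∧ z.re ≤ r+1 ∧ z.im ∈ (Set.univ : Set ℝ)}
          ∪ {z : ℂ | -(r+1) ≤ z.re ∧ z.re ≤ -(r*(1-δ)) ∧ z.im ∈ (Set.univ : Set ℝ)}) := by
    rintro z ⟨hz1, hz2⟩
    rw [Metric.mem_closedBall, dist_zero_right] at hz1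
    rw [Metric.mem_closedBall, dist_zero_right, not_le] at hz2
    have hu : ‖z‖^2 = z.re^2 + z.im^2 := by
      rw [Complex.sq_norm, Complex.normSq_apply]; ring
    have hre : |z.re| ≤ r + 1 := by
      exact le_trans (Complex.abs_re_le_norm z) hz1
    have hre2 := abs_le.mp hre
    by_cases hc : r*δ < |z.im|
    · exact Or.inl ⟨hre2.1, hre2.2, hc⟩
    · right
      push_neg at hc
      have him2 : z.im^2 ≤ (r*δ)^2 := by
        have := abs_nonneg z.im
        nlinarith [sq_abs z.im]
      have hkey : r*(1-δ) < |z.re| := by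
        have h1 : (r*(1-δ))^2 < z.re^2 := by nlinarith [norm_nonneg z]
        nlinarith [abs_nonneg z.re, sq_abs z.re]
      rcases le_or_gt 0 z.re with hr0 | hr0
      · left
        rw [abs_of_nonneg hr0] at hkey
        exact ⟨le_of_lt hkey, hre2.2, Set.mem_univ _⟩
      · right
        rw [abs_of_neg hr0] at hkey
        exact ⟨hre2.1, by linarith, Set.mem_univ _⟩
  calc μ _ ≤ _ := measure_mono hsub
    _ ≤ μ {z : ℂ | -(r+1) ≤ z.re ∧ z.re ≤ r+1 ∧ z.im ∈ {t : ℝ | r*δ < |t|}}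
        + (μ {z : ℂ | r*(1-δ) ≤ z.re ∧ z.re ≤ r+1 ∧ z.im ∈ (Set.univ : Set ℝ)}
          + μ {z : ℂ | -(r+1) ≤ z.re ∧ z.re ≤ -(r*(1-δ)) ∧ z.im ∈ (Set.univ : Set ℝ)}) :=
      le_trans (measure_union_le _ _) (by gcongr; exact measure_union_le _ _)
    _ ≤ ENNReal.ofReal ((r+1) - (-(r+1)) + 3) * μ {z : ℂ | 0 ≤ z.re ∧ z.re < 1 ∧ z.im ∈ {t : ℝ | r*δ < |t|}}
        + (ENNReal.ofReal ((r+1) - r*(1-δ) + 3) * μ {z : ℂ | 0 ≤ z.re ∧ z.re < 1 ∧ z.im ∈ (Set.univ : Set ℝ)}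
          + ENNReal.ofReal ((-(r*(1-δ))) - (-(r+1)) + 3) * μ {z : ℂ | 0 ≤ z.re ∧ z.re < 1 ∧ z.im ∈ (Set.univ : Set ℝ)}) := by
      gcongr
      · exact cover μ hinv _ _ _ (measurableSet_lt measurable_const measurable_abs)
      · exact cover μ hinv _ _ _ MeasurableSet.univ
      · exact cover μ hinv _ _ _ MeasurableSet.univ
    _ ≤ ENNReal.ofReal (2*r+5) * μ {z : ℂ | 0 ≤ z.re ∧ z.re < 1 ∧ z.im ∈ {t : ℝ | r*δ < |t|}}
        + ENNReal.ofReal (2*(r*δ)+8) * μ {z : ℂ | 0 ≤ z.re ∧ z.re < 1} := by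
      rw [heq]
      have e1 : (r+1) - (-(r+1)) + 3 = 2*r+5 := by ring
      rw [e1]
      gcongr
      rw [← add_mul, ← ENNReal.ofReal_add (by nlinarith) (by nlinarith)]
      exact mul_le_mul_left (ENNReal.ofReal_le_ofReal (by nlinarith)) _

/-- For a measure `μ` on `ℂ` invariant under translation by `1` and finite on the
fundamental strip, `μ(B(0,r+1)) - μ(B(0,r)) = o(r)` as `r → ∞`. -/
theorem stmt14 (μ : Measure ℂ) (hinv : Measure.map (fun z : ℂ => z + 1) μ = μ)
    (hfin : μ {z : ℂ | 0 ≤ z.re ∧ z.re < 1} ≠ ⊤) :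
    (fun r : ℝ => (μ (Metric.closedBall 0 (r + 1))).toReal
        - (μ (Metric.closedBall 0 r)).toReal) =o[atTop] (fun r : ℝ => r) := by
  set s := (μ {z : ℂ | 0 ≤ z.re ∧ z.re < 1}).toReal with hs
  have hs0 : 0 ≤ s := ENNReal.toReal_nonneg
  rw [Asymptotics.isLittleO_iff]
  intro ε hε
  set δ := min (ε / (4 * (s+1))) 1 with hδdef
  have hδ0 : 0 < δ := lt_min (by positivity) one_pos
  have hδ1 : δ ≤ 1 := min_le_right _ _
  have hδs : 2 * δ * s ≤ ε / 2 := by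
    have h1 : δ ≤ ε / (4*(s+1)) := min_le_left _ _
    have h2 : (0:ℝ) < 4*(s+1) := by linarith
    rw [le_div_iff₀ h2] at h1
    nlinarith
  have hg := gtend μ hfin
  have hgev := hg.eventually (Iio_mem_nhds (show (0:ℝ) < ε/12 by positivity))
  obtain ⟨c₀, hc₀⟩ := eventually_atTop.mp hgev
  have hrδ : Tendsto (fun r : ℝ => r * δ) atTop atTop :=
    Tendsto.atTop_mul_const hδ0 tendsto_id
  filter_upwards [eventually_ge_atTop (0:ℝ), eventually_ge_atTop (5:ℝ),
    eventually_ge_atTop (32*s/ε), hrδ.eventually_ge_atTop c₀] with r hr0 hr5 hrs hrc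
  have h8 : 8*s ≤ ε/4*r := by
    rw [div_le_iff₀ hε] at hrs; nlinarith
  have hBr := ball_fin μ hinv hfin r
  have hBr1 := ball_fin μ hinv hfin (r+1)
  have hmono : Metric.closedBall (0:ℂ) r ⊆ Metric.closedBall 0 (r+1) :=
    Metric.closedBall_subset_closedBall (by linarith)
  have hdiff : μ (Metric.closedBall 0 (r+1) \ Metric.closedBall 0 r)
      = μ (Metric.closedBall 0 (r+1)) - μ (Metric.closedBall 0 r) :=
    measure_diff hmono (measurableSet_closedBall).nullMeasurableSet hBr
  have hfr : (μ (Metric.closedBall 0 (r+1))).toReal - (μ (Metric.closedBall 0 r)).toReal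
      = (μ (Metric.closedBall 0 (r+1) \ Metric.closedBall 0 r)).toReal := by
    rw [hdiff, ENNReal.toReal_sub_of_le (measure_mono hmono) hBr1]
  rw [hfr, Real.norm_eq_abs, Real.norm_eq_abs, abs_of_nonneg hr0,
    abs_of_nonneg ENNReal.toReal_nonneg]
  have hbound := ann_bound μ hinv hδ0 hδ1 hr0
  set gδ := (μ {z : ℂ | 0 ≤ z.re ∧ z.re < 1 ∧ z.im ∈ {t : ℝ | r*δ < |t|}}).toReal with hgδ
  have hgfin : μ {z : ℂ | 0 ≤ z.re ∧ z.re < 1 ∧ z.im ∈ {t : ℝ | r*δ < |t|}} ≠ ⊤ :=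
    ne_top_of_le_ne_top hfin (measure_mono (strip_subset _))
  have hRHSfin : ENNReal.ofReal (2*r+5) * μ {z : ℂ | 0 ≤ z.re ∧ z.re < 1 ∧ z.im ∈ {t : ℝ | r*δ < |t|}}
      + ENNReal.ofReal (2*(r*δ)+8) * μ {z : ℂ | 0 ≤ z.re ∧ z.re < 1} ≠ ⊤ :=
    ENNReal.add_ne_top.mpr ⟨ENNReal.mul_ne_top ENNReal.ofReal_ne_top hgfin,
      ENNReal.mul_ne_top ENNReal.ofReal_ne_top hfin⟩
  have h1 : (μ (Metric.closedBall 0 (r+1) \ Metric.closedBall 0 r)).toReal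
      ≤ (2*r+5) * gδ + (2*(r*δ)+8) * s := by
    have h2 := ENNReal.toReal_mono hRHSfin hbound
    rwa [ENNReal.toReal_add (ENNReal.mul_ne_top ENNReal.ofReal_ne_top hgfin)
        (ENNReal.mul_ne_top ENNReal.ofReal_ne_top hfin),
      ENNReal.toReal_mul, ENNReal.toReal_mul,
      ENNReal.toReal_ofReal (by nlinarith), ENNReal.toReal_ofReal (by nlinarith)] at h2
  have hgsmall : gδ < ε/12 := hc₀ _ hrc
  have hgnn : 0 ≤ gδ := ENNReal.toReal_nonneg
  have key1 : (2*r+5) * gδ ≤ (3*r) * gδ :=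
    mul_le_mul_of_nonneg_right (by linarith) hgnn
  have key2 : (3*r) * gδ ≤ (3*r) * (ε/12) :=
    mul_le_mul_of_nonneg_left hgsmall.le (by linarith)
  have key3 : r * (2*δ*s) ≤ r * (ε/2) :=
    mul_le_mul_of_nonneg_left hδs hr0
  nlinarith [h1, key1, key2, key3, h8]
end

section
/- Let μ be a nonnegative Borel measure on ℂ invariant under translation by 1 with μ({z : 0 ≤ Re z < 1}) < ∞. Then the limit lim_{R→∞} ∫_{1 ≤ |w| < R} (1/w) dμ(w) exists (as a finite complex number). -/
open Real Filter MeasureTheory Set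
open scoped ENNReal NNReal

namespace Stmt15

/-- The strip `n ≤ re z < n+1`. -/
def S (n : ℤ) : Set ℂ := {z | (n : ℝ) ≤ z.re ∧ z.re < (n : ℝ) + 1}

lemma mem_S_iff {z : ℂ} {n : ℤ} : z ∈ S n ↔ ⌊z.re⌋ = n := by
  constructor
  · rintro ⟨h1, h2⟩; exact Int.floor_eq_iff.2 ⟨h1, h2⟩
  · rintro rfl; exact ⟨Int.floor_le _, Int.lt_floor_add_one _⟩

lemma measurableSet_S (n : ℤ) : MeasurableSet (S n) := by
  have : S n = Complex.re ⁻¹' (Ico (n : ℝ) ((n : ℝ) + 1)) := rfl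
  rw [this]
  exact Complex.measurable_re measurableSet_Ico

lemma S_disjoint : Pairwise (Function.onFun Disjoint S) := by
  intro m n hmn
  simp only [Function.onFun, Set.disjoint_left]
  intro z hm hn
  rw [mem_S_iff] at hm hn
  exact hmn (hm.symm.trans hn)

lemma iUnion_S : (⋃ n, S n) = univ := by
  ext z
  simp only [mem_iUnion, mem_univ, iff_true]
  exact ⟨⌊z.re⌋, mem_S_iff.2 rfl⟩

lemma preimage_S (n : ℤ) : (fun z : ℂ => z + (n : ℂ)) ⁻¹' S n = S 0 := by
  ext z
  simp only [S, mem_preimage, mem_setOf_eq, Complex.add_re, Complex.intCast_re]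
  push_cast
  constructor
  · rintro ⟨h1, h2⟩; constructor <;> linarith
  · rintro ⟨h1, h2⟩; constructor <;> linarith

/-- Negation-shift equivalence of `ℤ`. -/
def negSubEquiv : ℤ ≃ ℤ where
  toFun n := -n - 1
  invFun m := -m - 1
  left_inv n := by dsimp only; omega
  right_inv m := by dsimp only; omega

/-- The piecewise reflection `w ↦ w - (2⌊re w⌋ + 1)`. -/
noncomputable def σ (w : ℂ) : ℂ := w - ((2 * ⌊w.re⌋ + 1 : ℤ) : ℂ)

lemma σ_im (w : ℂ) : (σ w).im = w.im := by simp [σ]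

lemma σ_re (w : ℂ) : (σ w).re = w.re - (2 * (⌊w.re⌋ : ℝ) + 1) := by
  simp only [σ, Complex.sub_re, Complex.intCast_re]
  push_cast
  ring

lemma floor_σ_re (w : ℂ) : ⌊(σ w).re⌋ = -⌊w.re⌋ - 1 := by
  rw [σ_re]
  rw [show w.re - (2 * (⌊w.re⌋ : ℝ) + 1) = w.re - ((2 * ⌊w.re⌋ + 1 : ℤ) : ℝ) by push_cast; ring]
  rw [Int.floor_sub_intCast]
  ring

lemma σ_σ (w : ℂ) : σ (σ w) = w := by
  have h := floor_σ_re w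
  show σ w - ((2 * ⌊(σ w).re⌋ + 1 : ℤ) : ℂ) = w
  rw [h]
  show w - ((2 * ⌊w.re⌋ + 1 : ℤ) : ℂ) - _ = w
  push_cast
  ring

lemma measurable_σ : Measurable σ := by
  apply measurable_id.sub
  have h1 : Measurable fun w : ℂ => (2 * ⌊w.re⌋ + 1 : ℤ) :=
    ((Complex.measurable_re.floor.const_mul 2).add_const 1)
  exact (measurable_from_top (α := ℤ)).comp h1

lemma abs_σ_re_bounds (w : ℂ) :
    |w.re| - 1 ≤ |(σ w).re| ∧ |(σ w).re| ≤ |w.re| + 1 := by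
  rw [σ_re]
  set x := w.re with hx
  have h1 : (⌊x⌋ : ℝ) ≤ x := Int.floor_le x
  have h2 : x < (⌊x⌋ : ℝ) + 1 := Int.lt_floor_add_one x
  rcases le_or_gt 0 x with hx0 | hx0
  · have hn : (0 : ℝ) ≤ (⌊x⌋ : ℝ) := by exact_mod_cast Int.floor_nonneg.2 hx0
    have hxa : |x| = x := abs_of_nonneg hx0
    have : |x - (2 * (⌊x⌋:ℝ) + 1)| = 2 * (⌊x⌋:ℝ) + 1 - x := by
      rw [abs_of_nonpos] <;> [ring; linarith]
    rw [this, hxa]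
    constructor <;> linarith
  · have hn : (⌊x⌋ : ℝ) ≤ -1 := by
      have h3 : ⌊x⌋ < 0 := Int.floor_lt.2 (by simpa using hx0)
      have h4 : ⌊x⌋ ≤ -1 := by omega
      exact_mod_cast h4
    have hxa : |x| = -x := abs_of_neg hx0
    have : |x - (2 * (⌊x⌋:ℝ) + 1)| = x - (2 * (⌊x⌋:ℝ) + 1) := by
      rw [abs_of_nonneg]; linarith
    rw [this, hxa]
    constructor <;> linarith

lemma abs_σ_bounds {w : ℂ} (hw : 1 ≤ ‖w‖) :
    ‖w‖ - 3 ≤ ‖σ w‖ ∧ ‖σ w‖ ≤ ‖w‖ + 3 := by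
  have hre := abs_σ_re_bounds w
  have hre_le : |w.re| ≤ ‖w‖ := Complex.abs_re_le_norm w
  have hsq : (‖σ w‖)^2 = ((σ w).re)^2 + w.im^2 := by
    rw [Complex.sq_norm, Complex.normSq_apply, σ_im]; ring
  have hsq' : (‖w‖)^2 = (w.re)^2 + w.im^2 := by
    rw [Complex.sq_norm, Complex.normSq_apply]; ring
  have hdiff : |((σ w).re)^2 - (w.re)^2| ≤ 2 * |w.re| + 1 := by
    have he : ((σ w).re)^2 - (w.re)^2 = (|(σ w).re| - |w.re|) * (|(σ w).re| + |w.re|) := by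
      rw [← sq_abs ((σ w).re), ← sq_abs w.re]; ring
    rw [he, abs_mul]
    have h1 : |(|(σ w).re| - |w.re|)| ≤ 1 := abs_le.2 ⟨by linarith [hre.1], by linarith [hre.2]⟩
    have h2 : |(|(σ w).re| + |w.re|)| ≤ 2 * |w.re| + 1 := by
      rw [abs_of_nonneg (by positivity)]
      linarith [hre.2]
    calc |(|(σ w).re| - |w.re|)| * |(|(σ w).re| + |w.re|)|
        ≤ 1 * (2 * |w.re| + 1) := mul_le_mul h1 h2 (abs_nonneg _) zero_le_one
      _ = 2 * |w.re| + 1 := by ring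
  have habs : |(‖σ w‖)^2 - (‖w‖)^2| ≤ 3 * ‖w‖ := by
    rw [hsq, hsq']
    have he : (σ w).re^2 + w.im^2 - (w.re^2 + w.im^2) = (σ w).re^2 - w.re^2 := by ring
    rw [he]
    calc |((σ w).re)^2 - (w.re)^2| ≤ 2 * |w.re| + 1 := hdiff
      _ ≤ 2 * ‖w‖ + ‖w‖ := by linarith
      _ = 3 * ‖w‖ := by ring
  have h0σ : 0 ≤ ‖σ w‖ := norm_nonneg _
  have h0w : 0 ≤ ‖w‖ := norm_nonneg _
  rw [abs_le] at habs
  constructor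
  · rcases le_or_gt (‖w‖) 3 with h | h
    · linarith
    · nlinarith [habs.1]
  · nlinarith [habs.2]

lemma telescope_range (m : ℕ) (hm : 2 ≤ m) (N : ℕ) :
    ∑ i ∈ Finset.range N, ((1:ℝ)/((m:ℝ)+i-1) - 1/((m:ℝ)+i)) ≤ 1/((m:ℝ)-1) := by
  have key : ∀ i : ℕ, ((1:ℝ)/((m:ℝ)+i-1) - 1/((m:ℝ)+i))
      = (fun j : ℕ => -(1:ℝ)/((m:ℝ)+j-1)) (i+1) - (fun j : ℕ => -(1:ℝ)/((m:ℝ)+j-1)) i := by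
    intro i
    push_cast
    ring
  have hm' : (2:ℝ) ≤ (m:ℝ) := by exact_mod_cast hm
  have hN : (0:ℝ) ≤ (N:ℝ) := Nat.cast_nonneg N
  calc ∑ i ∈ Finset.range N, ((1:ℝ)/((m:ℝ)+i-1) - 1/((m:ℝ)+i))
      = ∑ i ∈ Finset.range N,
        ((fun j : ℕ => -(1:ℝ)/((m:ℝ)+j-1)) (i+1) - (fun j : ℕ => -(1:ℝ)/((m:ℝ)+j-1)) i) :=
        Finset.sum_congr rfl fun i _ => key i
    _ = -(1:ℝ)/((m:ℝ)+(N:ℝ)-1) - (-(1:ℝ)/((m:ℝ)+((0:ℕ):ℝ)-1)) :=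
        Finset.sum_range_sub (fun j : ℕ => -(1:ℝ)/((m:ℝ)+j-1)) N
    _ ≤ 1/((m:ℝ)-1) := by
        have h3 : -(1:ℝ)/((m:ℝ)+(N:ℝ)-1) ≤ 0 := by
          rw [div_nonpos_iff]
          right
          constructor <;> linarith
        have h4 : -(-(1:ℝ)/((m:ℝ)+((0:ℕ):ℝ)-1)) = 1/((m:ℝ)-1) := by
          push_cast
          ring
        rw [sub_eq_add_neg, h4]
        linarith

lemma sum_inv_sq_le (m : ℕ) (hm : 2 ≤ m) (u : Finset ℕ) (hu : ∀ k ∈ u, m ≤ k) :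
    ∑ k ∈ u, (1:ℝ)/(k:ℝ)^2 ≤ 1/((m:ℝ)-1) := by
  classical
  set K := (u.sup id) + 1 with hK
  have hsub : u ⊆ Finset.Ico m K := fun k hk =>
    Finset.mem_Ico.2 ⟨hu k hk, Nat.lt_succ_of_le (Finset.le_sup (f := id) hk)⟩
  have hterm : ∀ k : ℕ, m ≤ k → (1:ℝ)/(k:ℝ)^2 ≤ 1/((k:ℝ)-1) - 1/(k:ℝ) := by
    intro k hk
    have hk2 : (2:ℝ) ≤ (k:ℝ) := by
      have := le_trans hm hk
      exact_mod_cast this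
    have hk1 : (0:ℝ) < (k:ℝ) - 1 := by linarith
    have hk0 : (0:ℝ) < (k:ℝ) := by linarith
    rw [div_sub_div _ _ (ne_of_gt hk1) (ne_of_gt hk0)]
    have hnum : (1:ℝ) * (k:ℝ) - ((k:ℝ)-1) * 1 = 1 := by ring
    rw [hnum]
    apply one_div_le_one_div_of_le
    · positivity
    · nlinarith
  have hnn : ∀ k ∈ Finset.Ico m K, (0:ℝ) ≤ 1/((k:ℝ)-1) - 1/(k:ℝ) := by
    intro k hk
    have hmk := (Finset.mem_Ico.1 hk).1
    have hk2 : (2:ℝ) ≤ (k:ℝ) := by exact_mod_cast le_trans hm hmk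
    have h1 : (0:ℝ) < (k:ℝ) - 1 := by linarith
    have h2 : (0:ℝ) < (k:ℝ) := by linarith
    have : 1/(k:ℝ) ≤ 1/((k:ℝ)-1) := by
      apply one_div_le_one_div_of_le h1; linarith
    linarith
  calc ∑ k ∈ u, (1:ℝ)/(k:ℝ)^2
      ≤ ∑ k ∈ u, (1/((k:ℝ)-1) - 1/(k:ℝ)) := Finset.sum_le_sum fun k hk => hterm k (hu k hk)
    _ ≤ ∑ k ∈ Finset.Ico m K, (1/((k:ℝ)-1) - 1/(k:ℝ)) :=
        Finset.sum_le_sum_of_subset_of_nonneg hsub fun k hk _ => hnn k hk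
    _ = ∑ i ∈ Finset.range (K - m), (1/(((m+i:ℕ):ℝ)-1) - 1/((m+i:ℕ):ℝ)) := by
        rw [Finset.sum_Ico_eq_sum_range]
    _ = ∑ i ∈ Finset.range (K - m), ((1:ℝ)/((m:ℝ)+i-1) - 1/((m:ℝ)+i)) := by
        apply Finset.sum_congr rfl
        intro i _
        push_cast
        ring_nf
    _ ≤ 1/((m:ℝ)-1) := telescope_range m hm _

lemma sum_int_bound {M : ℝ} (hM : 16 ≤ M) (s : Finset ℤ) :
    ∑ n ∈ s, (1:ℝ) / (max (|(n:ℝ)| - 2) M)^2 ≤ 7 / M := by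
  classical
  have hM0 : (0:ℝ) < M := by linarith
  set g : ℤ → ℝ := fun n => (1:ℝ) / (max (|(n:ℝ)| - 2) M)^2 with hg
  set s1 := s.filter (fun n : ℤ => |(n:ℝ)| ≤ M + 2) with hs1
  set s2 := s.filter (fun n : ℤ => ¬ |(n:ℝ)| ≤ M + 2) with hs2
  have hsplit : ∑ n ∈ s, g n = ∑ n ∈ s1, g n + ∑ n ∈ s2, g n :=
    (Finset.sum_filter_add_sum_filter_not s _ _).symm
  have hb1 : ∑ n ∈ s1, g n ≤ 3 / M := by
    have hcard : (s1.card : ℝ) ≤ 3 * M := by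
      have hsub : s1 ⊆ Finset.Icc (⌈-(M+2)⌉) (⌊M+2⌋) := by
        intro n hn
        have h := (Finset.mem_filter.1 hn).2
        rw [abs_le] at h
        exact Finset.mem_Icc.2 ⟨Int.ceil_le.2 h.1, Int.le_floor.2 h.2⟩
      have h1 : (s1.card : ℝ) ≤ ((Finset.Icc (⌈-(M+2)⌉) (⌊M+2⌋)).card : ℝ) := by
        exact_mod_cast Finset.card_le_card hsub
      have h2 : ((Finset.Icc (⌈-(M+2)⌉) (⌊M+2⌋)).card : ℝ) ≤ 2 * (M + 2) + 1 := by
        rw [Int.card_Icc]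
        rcases le_or_gt (⌈-(M+2)⌉ : ℤ) (⌊M+2⌋) with h | h
        · have h0 : (0:ℤ) ≤ ⌊M+2⌋ + 1 - ⌈-(M+2)⌉ := by omega
          have hcast : ((⌊M+2⌋ + 1 - ⌈-(M+2)⌉).toNat : ℝ) = ((⌊M+2⌋ : ℝ) + 1 - (⌈-(M+2)⌉ : ℝ)) := by
            push_cast
            exact_mod_cast Int.toNat_of_nonneg h0
          rw [hcast]
          have hf : (⌊M+2⌋ : ℝ) ≤ M + 2 := Int.floor_le _
          have hc : -(M+2) ≤ (⌈-(M+2)⌉ : ℝ) := Int.le_ceil _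
          linarith
        · have h0 : (⌊M+2⌋ + 1 - ⌈-(M+2)⌉ : ℤ).toNat = 0 := by omega
          rw [h0]
          simp
          linarith
      calc (s1.card : ℝ) ≤ 2 * (M+2) + 1 := le_trans h1 h2
        _ ≤ 3 * M := by linarith
    have hterm : ∀ n ∈ s1, g n ≤ 1 / M^2 := by
      intro n _
      apply one_div_le_one_div_of_le (by positivity)
      have h := le_max_right (|(n:ℝ)| - 2) M
      nlinarith
    calc ∑ n ∈ s1, g n ≤ ∑ _n ∈ s1, 1 / M^2 := Finset.sum_le_sum hterm
      _ = s1.card * (1/M^2) := by rw [Finset.sum_const, nsmul_eq_mul]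
      _ ≤ 3 * M * (1/M^2) := mul_le_mul_of_nonneg_right hcard (by positivity)
      _ = 3 / M := by field_simp
  have hb2 : ∑ n ∈ s2, g n ≤ 4 / M := by
    have hmax : ∀ n ∈ s2, max (|(n:ℝ)| - 2) M = |(n:ℝ)| - 2 := by
      intro n hn
      have h := (Finset.mem_filter.1 hn).2
      push_neg at h
      exact max_eq_left (by linarith)
    set m : ℕ := ⌊M⌋.toNat + 1 with hm
    have hfl0 : (0:ℤ) ≤ ⌊M⌋ := Int.floor_nonneg.2 (by linarith)
    have hmcast : (m:ℝ) = (⌊M⌋ : ℝ) + 1 := by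
      rw [hm]
      have h2 : ((⌊M⌋.toNat : ℕ) : ℝ) = ((⌊M⌋ : ℤ) : ℝ) := by
        exact_mod_cast Int.toNat_of_nonneg hfl0
      push_cast
      linarith [h2]
    have hm2 : 2 ≤ m := by
      have h16 : (16:ℤ) ≤ ⌊M⌋ := by
        have := Int.le_floor.2 (show ((16:ℤ):ℝ) ≤ M by push_cast; linarith)
        exact this
      omega
    have hmM' : (m:ℝ) - 1 ≥ M / 2 := by
      rw [hmcast]
      have := Int.lt_floor_add_one M
      linarith
    set s2p := s2.filter (fun n : ℤ => 0 ≤ n) with hs2p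
    set s2n := s2.filter (fun n : ℤ => ¬ 0 ≤ n) with hs2n
    have hsplit2 : ∑ n ∈ s2, g n = ∑ n ∈ s2p, g n + ∑ n ∈ s2n, g n :=
      (Finset.sum_filter_add_sum_filter_not s2 _ _).symm
    have habs_of_p : ∀ n ∈ s2p, M + 2 < (n:ℝ) ∧ (5:ℤ) ≤ n := by
      intro n hn
      have hns2 := (Finset.mem_filter.1 hn).1
      have habs := (Finset.mem_filter.1 hns2).2
      push_neg at habs
      have hn2 := (Finset.mem_filter.1 hn).2
      have hpos : (0:ℝ) ≤ (n:ℝ) := by exact_mod_cast hn2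
      rw [abs_of_nonneg hpos] at habs
      refine ⟨habs, ?_⟩
      exact_mod_cast (show ((5:ℤ):ℝ) ≤ (n:ℝ) by push_cast; linarith)
    have habs_of_n : ∀ n ∈ s2n, M + 2 < -(n:ℝ) ∧ n ≤ -5 := by
      intro n hn
      have hns2 := (Finset.mem_filter.1 hn).1
      have habs := (Finset.mem_filter.1 hns2).2
      push_neg at habs
      have hn2 := (Finset.mem_filter.1 hn).2
      push_neg at hn2
      have hneg : (n:ℝ) < 0 := by exact_mod_cast hn2
      rw [abs_of_neg hneg] at habs
      refine ⟨habs, ?_⟩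
      exact_mod_cast (show ((n:ℤ):ℝ) ≤ ((-5:ℤ):ℝ) by push_cast; linarith)
    have hbp : ∑ n ∈ s2p, g n ≤ 1/((m:ℝ)-1) := by
      have himg : ∑ n ∈ s2p, g n
          = ∑ k ∈ s2p.image (fun n : ℤ => (n - 2).toNat), (1:ℝ)/(k:ℝ)^2 := by
        rw [Finset.sum_image]
        · apply Finset.sum_congr rfl
          intro n hn
          obtain ⟨habs, h5⟩ := habs_of_p n hn
          have hns2 := (Finset.mem_filter.1 hn).1
          have hcast : (((n - 2).toNat : ℕ) : ℝ) = (n:ℝ) - 2 := by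
            push_cast
            exact_mod_cast Int.toNat_of_nonneg (by omega : (0:ℤ) ≤ n - 2)
          rw [hg]
          simp only
          rw [hmax n hns2, abs_of_nonneg (by linarith : (0:ℝ) ≤ (n:ℝ)), hcast]
        · intro a ha b hb hab
          have h5a := (habs_of_p a ha).2
          have h5b := (habs_of_p b hb).2
          simp only at hab
          omega
      rw [himg]
      apply sum_inv_sq_le m hm2
      intro k hk
      rw [Finset.mem_image] at hk
      obtain ⟨n, hn, rfl⟩ := hk
      obtain ⟨habs, h5⟩ := habs_of_p n hn
      have hfl : ⌊M⌋ < n - 2 := by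
        have h' : ((⌊M⌋:ℤ):ℝ) < ((n-2:ℤ):ℝ) := by
          calc ((⌊M⌋:ℤ):ℝ) ≤ M := Int.floor_le M
            _ < ((n-2:ℤ):ℝ) := by push_cast; linarith
        exact_mod_cast h'
      omega
    have hbn : ∑ n ∈ s2n, g n ≤ 1/((m:ℝ)-1) := by
      have himg : ∑ n ∈ s2n, g n
          = ∑ k ∈ s2n.image (fun n : ℤ => (-n - 2).toNat), (1:ℝ)/(k:ℝ)^2 := by
        rw [Finset.sum_image]
        · apply Finset.sum_congr rfl
          intro n hn
          obtain ⟨habs, h5⟩ := habs_of_n n hn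
          have hns2 := (Finset.mem_filter.1 hn).1
          have hcast : (((-n - 2).toNat : ℕ) : ℝ) = -(n:ℝ) - 2 := by
            push_cast
            exact_mod_cast Int.toNat_of_nonneg (by omega : (0:ℤ) ≤ -n - 2)
          rw [hg]
          simp only
          rw [hmax n hns2, abs_of_neg (by linarith : (n:ℝ) < 0), hcast]
        · intro a ha b hb hab
          have h5a := (habs_of_n a ha).2
          have h5b := (habs_of_n b hb).2
          simp only at hab
          omega
      rw [himg]
      apply sum_inv_sq_le m hm2
      intro k hk
      rw [Finset.mem_image] at hk
      obtain ⟨n, hn, rfl⟩ := hk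
      obtain ⟨habs, h5⟩ := habs_of_n n hn
      have hfl : ⌊M⌋ < -n - 2 := by
        have h' : ((⌊M⌋:ℤ):ℝ) < ((-n-2:ℤ):ℝ) := by
          calc ((⌊M⌋:ℤ):ℝ) ≤ M := Int.floor_le M
            _ < ((-n-2:ℤ):ℝ) := by push_cast; linarith
        exact_mod_cast h'
      omega
    have hhalf : 1/((m:ℝ)-1) ≤ 2/M := by
      rw [div_le_div_iff₀ (by linarith) hM0]
      linarith
    calc ∑ n ∈ s2, g n = _ + _ := hsplit2
      _ ≤ 2/M + 2/M := add_le_add (le_trans hbp hhalf) (le_trans hbn hhalf)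
      _ = 4/M := by ring
  calc ∑ n ∈ s, g n = _ + _ := hsplit
    _ ≤ 3/M + 4/M := add_le_add hb1 hb2
    _ = 7/M := by ring

lemma tsum_ofReal_le {f : ℤ → ℝ} (hf : ∀ n, 0 ≤ f n) {C : ℝ}
    (h : ∀ s : Finset ℤ, ∑ n ∈ s, f n ≤ C) :
    ∑' n : ℤ, ENNReal.ofReal (f n) ≤ ENNReal.ofReal C := by
  rw [ENNReal.tsum_eq_iSup_sum]
  apply iSup_le
  intro s
  rw [← ENNReal.ofReal_sum_of_nonneg (fun n _ => hf n)]
  exact ENNReal.ofReal_le_ofReal (h s)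


lemma count_annulus (z : ℂ) {t : ℝ} (ht : 16 ≤ t) :
    ∑' n : ℤ, Set.indicator {w : ℂ | t - 3 ≤ ‖w‖ ∧ ‖w‖ ≤ t + 3}
      (fun _ => (1:ℝ≥0∞)) (z + (n:ℂ)) ≤ ENNReal.ofReal (9 * Real.sqrt t) := by
  classical
  set x := z.re with hx
  set y := z.im with hy
  set b := Real.sqrt (max ((t+3)^2 - y^2) 0) with hb
  set a := Real.sqrt (max ((t-3)^2 - y^2) 0) with ha
  have ha0 : 0 ≤ a := Real.sqrt_nonneg _
  have hb0 : 0 ≤ b := Real.sqrt_nonneg _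
  have hab : a ≤ b := by
    apply Real.sqrt_le_sqrt
    apply max_le_max_right
    nlinarith [sq_nonneg y]
  have hasq : a^2 = max ((t-3)^2 - y^2) 0 := Real.sq_sqrt (le_max_right _ _)
  have hbsq : b^2 = max ((t+3)^2 - y^2) 0 := Real.sq_sqrt (le_max_right _ _)
  set F : Finset ℤ := Finset.Icc ⌈a - x⌉ ⌊b - x⌋ ∪ Finset.Icc ⌈-x - b⌉ ⌊-x - a⌋ with hF
  have hmem : ∀ n : ℤ, (z + (n:ℂ)) ∈ {w : ℂ | t - 3 ≤ ‖w‖ ∧ ‖w‖ ≤ t + 3}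
      → n ∈ F := by
    intro n hn
    obtain ⟨h1, h2⟩ := hn
    have habs : (‖z + (n:ℂ)‖)^2 = (x + n)^2 + y^2 := by
      rw [Complex.sq_norm, Complex.normSq_apply]
      simp [Complex.add_re, Complex.add_im]
      ring
    have h3 : (t-3)^2 ≤ (x+n)^2 + y^2 := by
      rw [← habs]
      have h13 : (0:ℝ) ≤ t - 3 := by linarith
      nlinarith [norm_nonneg (z + (n:ℂ))]
    have h4 : (x+n)^2 + y^2 ≤ (t+3)^2 := by
      rw [← habs]
      nlinarith [norm_nonneg (z + (n:ℂ))]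
    have hle : |x + n| ≤ b := by
      have : (x+n)^2 ≤ b^2 := by
        rw [hbsq]
        rcases le_max_iff.2 (Or.inl (by linarith : (x+n)^2 ≤ (t+3)^2 - y^2)) with h
        exact h
      calc |x + n| = Real.sqrt ((x+n)^2) := (Real.sqrt_sq_eq_abs _).symm
        _ ≤ Real.sqrt (b^2) := Real.sqrt_le_sqrt this
        _ = b := by rw [Real.sqrt_sq hb0]
    have hge : a ≤ |x + n| := by
      have : a^2 ≤ (x+n)^2 := by
        rw [hasq]
        apply max_le (by linarith) (sq_nonneg _)
      calc a = Real.sqrt (a^2) := (Real.sqrt_sq ha0).symm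
        _ ≤ Real.sqrt ((x+n)^2) := Real.sqrt_le_sqrt this
        _ = |x + n| := Real.sqrt_sq_eq_abs _
    rcases le_or_gt 0 (x + n) with hsgn | hsgn
    · rw [abs_of_nonneg hsgn] at hle hge
      apply Finset.mem_union_left
      exact Finset.mem_Icc.2 ⟨Int.ceil_le.2 (by push_cast; linarith),
        Int.le_floor.2 (by push_cast; linarith)⟩
    · rw [abs_of_neg hsgn] at hle hge
      apply Finset.mem_union_right
      exact Finset.mem_Icc.2 ⟨Int.ceil_le.2 (by push_cast; linarith),
        Int.le_floor.2 (by push_cast; linarith)⟩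
  calc ∑' n : ℤ, Set.indicator {w : ℂ | t - 3 ≤ ‖w‖ ∧ ‖w‖ ≤ t + 3}
        (fun _ => (1:ℝ≥0∞)) (z + (n:ℂ))
      ≤ ∑' n : ℤ, (if n ∈ F then (1:ℝ≥0∞) else 0) := by
        apply ENNReal.tsum_le_tsum
        intro n
        by_cases h : (z + (n:ℂ)) ∈ {w : ℂ | t - 3 ≤ ‖w‖ ∧ ‖w‖ ≤ t + 3}
        · rw [Set.indicator_of_mem h, if_pos (hmem n h)]
        · rw [Set.indicator_of_notMem h]
          exact zero_le
    _ = (F.card : ℝ≥0∞) := by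
        rw [tsum_eq_sum (s := F) (fun n hn => if_neg hn)]
        rw [Finset.sum_congr rfl (fun n hn => if_pos hn), Finset.sum_const, nsmul_eq_mul, mul_one]
    _ ≤ ENNReal.ofReal (9 * Real.sqrt t) := by
        have hcard : (F.card : ℝ) ≤ 2 * (b - a) + 2 := by
          have h1 : ((Finset.Icc ⌈a - x⌉ ⌊b - x⌋).card : ℝ) ≤ (b - a) + 1 := by
            rw [Int.card_Icc]
            rcases le_or_gt (⌈a - x⌉ : ℤ) ⌊b - x⌋ with h | h
            · have h0 : (0:ℤ) ≤ ⌊b - x⌋ + 1 - ⌈a - x⌉ := by omega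
              have hc : ((⌊b - x⌋ + 1 - ⌈a - x⌉).toNat : ℝ) = (⌊b - x⌋ : ℝ) + 1 - (⌈a - x⌉ : ℝ) := by
                push_cast
                exact_mod_cast Int.toNat_of_nonneg h0
              rw [hc]
              have := Int.floor_le (b - x)
              have := Int.le_ceil (a - x)
              linarith
            · have h0 : (⌊b - x⌋ + 1 - ⌈a - x⌉ : ℤ).toNat = 0 := by omega
              rw [h0]
              simp
              linarith
          have h2 : ((Finset.Icc ⌈-x - b⌉ ⌊-x - a⌋).card : ℝ) ≤ (b - a) + 1 := by
            rw [Int.card_Icc]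
            rcases le_or_gt (⌈-x - b⌉ : ℤ) ⌊-x - a⌋ with h | h
            · have h0 : (0:ℤ) ≤ ⌊-x - a⌋ + 1 - ⌈-x - b⌉ := by omega
              have hc : ((⌊-x - a⌋ + 1 - ⌈-x - b⌉).toNat : ℝ) = (⌊-x - a⌋ : ℝ) + 1 - (⌈-x - b⌉ : ℝ) := by
                push_cast
                exact_mod_cast Int.toNat_of_nonneg h0
              rw [hc]
              have := Int.floor_le (-x - a)
              have := Int.le_ceil (-x - b)
              linarith
            · have h0 : (⌊-x - a⌋ + 1 - ⌈-x - b⌉ : ℤ).toNat = 0 := by omega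
              rw [h0]
              simp
              linarith
          have h3 : (F.card : ℝ) ≤ ((Finset.Icc ⌈a - x⌉ ⌊b - x⌋).card : ℝ)
              + ((Finset.Icc ⌈-x - b⌉ ⌊-x - a⌋).card : ℝ) := by
            exact_mod_cast Finset.card_union_le _ _
          linarith
        have hst : (0:ℝ) ≤ Real.sqrt t := Real.sqrt_nonneg t
        have hst4 : (4:ℝ) ≤ Real.sqrt t := by
          rw [show (4:ℝ) = Real.sqrt 16 from by
            rw [show (16:ℝ) = 4^2 by norm_num, Real.sqrt_sq (by norm_num)]]
          exact Real.sqrt_le_sqrt ht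
        have hba : b - a ≤ 4 * Real.sqrt t := by
          have hdiff : b^2 - a^2 ≤ 12 * t := by
            rw [hasq, hbsq]
            rcases le_or_gt 0 ((t-3)^2 - y^2) with h | h
            · rw [max_eq_left h, max_eq_left (by nlinarith)]
              nlinarith
            · rw [max_eq_right (le_of_lt h)]
              rcases le_or_gt ((t+3)^2 - y^2) 0 with h' | h'
              · rw [max_eq_right h']
                nlinarith
              · rw [max_eq_left (le_of_lt h')]
                nlinarith
          have hsq : (b - a)^2 ≤ b^2 - a^2 := by nlinarith
          have : (b - a)^2 ≤ (4 * Real.sqrt t)^2 := by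
            have h16 : (4 * Real.sqrt t)^2 = 16 * t := by
              rw [mul_pow, Real.sq_sqrt (by linarith)]
              ring
            rw [h16]
            nlinarith
          nlinarith [sq_nonneg (b - a - 4 * Real.sqrt t), hab]
        have hfinal : (F.card : ℝ) ≤ 9 * Real.sqrt t := by
          calc (F.card : ℝ) ≤ 2 * (b - a) + 2 := hcard
            _ ≤ 8 * Real.sqrt t + Real.sqrt t := by linarith
            _ = 9 * Real.sqrt t := by ring
        calc (F.card : ℝ≥0∞) = ENNReal.ofReal ((F.card : ℝ)) := by
              rw [ENNReal.ofReal_natCast]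
          _ ≤ ENNReal.ofReal (9 * Real.sqrt t) := ENNReal.ofReal_le_ofReal hfinal

variable {μ : Measure ℂ} (hinv : Measure.map (fun z : ℂ => z + 1) μ = μ)
include hinv

lemma map_int (n : ℤ) : μ.map (fun z : ℂ => z + (n : ℂ)) = μ := by
  have hm : ∀ c : ℂ, Measurable (fun z : ℂ => z + c) := fun c => measurable_add_const c
  have hneg : μ.map (fun z : ℂ => z + (-1 : ℂ)) = μ := by
    conv_lhs => rw [← hinv]
    rw [Measure.map_map (hm _) (hm _)]
    have : ((fun z : ℂ => z + (-1:ℂ)) ∘ (fun z : ℂ => z + 1)) = id := by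
      funext z; simp
    rw [this, Measure.map_id]
  induction n using Int.induction_on with
  | zero => simpa using Measure.map_id
  | succ k ih =>
      have : (fun z : ℂ => z + (((k:ℤ) + 1 : ℤ) : ℂ)) = (fun z : ℂ => z + 1) ∘ (fun z : ℂ => z + ((k : ℤ) : ℂ)) := by
        funext z; push_cast; simp [add_assoc]
      rw [this, ← Measure.map_map (hm _) (hm _), ih, hinv]
  | pred k ih =>
      have : (fun z : ℂ => z + ((-(k:ℤ) - 1 : ℤ) : ℂ)) = (fun z : ℂ => z + (-1)) ∘ (fun z : ℂ => z + ((-(k:ℤ) : ℤ) : ℂ)) := by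
        funext z; simp only [Function.comp_apply]; push_cast; ring
      rw [this, ← Measure.map_map (hm _) (hm _), ih, hneg]

lemma meas_preimage (n : ℤ) {E : Set ℂ} (hE : MeasurableSet E) :
    μ ((fun z : ℂ => z + (n : ℂ)) ⁻¹' E) = μ E := by
  conv_rhs => rw [← map_int hinv n]
  rw [Measure.map_apply (measurable_add_const _) hE]

lemma meas_S (n : ℤ) : μ (S n) = μ (S 0) := by
  rw [← preimage_S n, meas_preimage hinv n (measurableSet_S n)]

lemma map_σ : μ.map σ = μ := by
  apply Measure.ext
  intro E hE
  rw [Measure.map_apply measurable_σ hE]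
  have hXn : ∀ n : ℤ, μ (σ ⁻¹' E ∩ S n) = μ (E ∩ S (-n - 1)) := by
    intro n
    have key : (fun z : ℂ => z + ((2 * n + 1 : ℤ) : ℂ)) ⁻¹' (σ ⁻¹' E ∩ S n)
        = E ∩ S (-n - 1) := by
      ext z
      have hre : (z + ((2 * n + 1 : ℤ) : ℂ)).re = z.re + ((2 * n + 1 : ℤ) : ℝ) := by
        simp [Complex.add_re]
      constructor
      · rintro ⟨h1, h2⟩
        have hfl : ⌊(z + ((2 * n + 1 : ℤ) : ℂ)).re⌋ = n := mem_S_iff.1 h2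
        have hσ : σ (z + ((2 * n + 1 : ℤ) : ℂ)) = z := by
          simp only [σ, hfl]; ring
        rw [mem_preimage, hσ] at h1
        refine ⟨h1, mem_S_iff.2 ?_⟩
        rw [hre, Int.floor_add_intCast] at hfl
        omega
      · rintro ⟨h1, h2⟩
        rw [mem_S_iff] at h2
        have hfl : ⌊(z + ((2 * n + 1 : ℤ) : ℂ)).re⌋ = n := by
          rw [hre, Int.floor_add_intCast]
          omega
        have hσ : σ (z + ((2 * n + 1 : ℤ) : ℂ)) = z := by
          simp only [σ, hfl]; ring
        exact ⟨by rw [mem_preimage, hσ]; exact h1, mem_S_iff.2 hfl⟩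
    have hmeas : MeasurableSet (σ ⁻¹' E ∩ S n) :=
      (measurable_σ hE).inter (measurableSet_S n)
    rw [← meas_preimage hinv (2 * n + 1) hmeas, key]
  have hdecomp : ∀ X : Set ℂ, MeasurableSet X → μ X = ∑' n : ℤ, μ (X ∩ S n) := by
    intro X hX
    have hu : X = ⋃ n : ℤ, X ∩ S n := by
      rw [← inter_iUnion, iUnion_S, inter_univ]
    conv_lhs => rw [hu]
    rw [measure_iUnion]
    · intro m n hmn
      exact (S_disjoint hmn).mono inter_subset_right inter_subset_right
    · exact fun n => hX.inter (measurableSet_S n)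
  rw [hdecomp _ (measurable_σ hE), hdecomp _ hE]
  rw [tsum_congr hXn]
  exact negSubEquiv.tsum_eq (fun m => μ (E ∩ S m))

lemma lintegral_wrap (F : ℂ → ℝ≥0∞) (hF : Measurable F) :
    ∫⁻ w, F w ∂μ = ∫⁻ z in S 0, ∑' n : ℤ, F (z + (n : ℂ)) ∂μ := by
  have h1 : ∫⁻ w, F w ∂μ = ∑' n : ℤ, ∫⁻ w in S n, F w ∂μ := by
    rw [← lintegral_iUnion measurableSet_S S_disjoint, iUnion_S, setLIntegral_univ]
  have h2 : ∀ n : ℤ, ∫⁻ w in S n, F w ∂μ = ∫⁻ z in S 0, F (z + (n : ℂ)) ∂μ := by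
    intro n
    conv_lhs => rw [← map_int hinv n]
    rw [setLIntegral_map (measurableSet_S n) hF (measurable_add_const _), preimage_S]
  rw [h1, tsum_congr h2, ← lintegral_tsum]
  intro n
  exact (hF.comp (measurable_add_const _)).aemeasurable


/-- measurable equivalence given by `σ`. -/
noncomputable def σEquiv : ℂ ≃ᵐ ℂ where
  toFun := σ
  invFun := σ
  left_inv := σ_σ
  right_inv := σ_σ
  measurable_toFun := measurable_σ
  measurable_invFun := measurable_σ

lemma meas_ball_ne_top (hfin : μ (S 0) ≠ ⊤) (R : ℝ) :
    μ {w : ℂ | ‖w‖ ≤ R} ≠ ⊤ := by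
  have hsub : {w : ℂ | ‖w‖ ≤ R} ⊆ ⋃ n ∈ Finset.Icc ⌊-R⌋ ⌈R⌉, S n := by
    intro w hw
    have h1 : |w.re| ≤ R := le_trans (Complex.abs_re_le_norm w) hw
    rw [abs_le] at h1
    have hn1 : ⌊-R⌋ ≤ ⌊w.re⌋ := Int.floor_le_floor h1.1
    have hn2 : ⌊w.re⌋ ≤ ⌈R⌉ := le_trans (Int.floor_le_floor h1.2) (Int.floor_le_ceil R)
    exact Set.mem_biUnion (Finset.mem_Icc.2 ⟨hn1, hn2⟩) (mem_S_iff.2 rfl)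
  apply ne_top_of_le_ne_top _ (measure_mono hsub)
  apply ne_top_of_le_ne_top _ (measure_biUnion_finset_le _ _)
  have : ∀ n ∈ Finset.Icc ⌊-R⌋ ⌈R⌉, μ (S n) = μ (S 0) := fun n _ => meas_S hinv n
  rw [Finset.sum_congr rfl this, Finset.sum_const, nsmul_eq_mul]
  exact ENNReal.mul_ne_top (ENNReal.natCast_ne_top _) hfin

lemma integrableOn_inv (hfin : μ (S 0) ≠ ⊤) {X : Set ℂ} (hX : MeasurableSet X) {R : ℝ}
    (hXR : X ⊆ {w : ℂ | 1 ≤ ‖w‖ ∧ ‖w‖ ≤ R}) :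
    IntegrableOn (fun w : ℂ => w⁻¹) X μ := by
  have hXfin : μ X ≠ ⊤ := by
    apply ne_top_of_le_ne_top (meas_ball_ne_top hinv hfin R)
    exact measure_mono fun w hw => (hXR hw).2
  apply Measure.integrableOn_of_bounded (M := 1) hXfin
    (measurable_inv.aestronglyMeasurable)
  rw [ae_restrict_iff' hX]
  apply ae_of_all
  intro w hw
  have h1 : 1 ≤ ‖w‖ := (hXR hw).1
  rw [norm_inv]
  rw [inv_le_one_iff₀]
  right
  exact h1

lemma main_estimate (hfin : μ (S 0) ≠ ⊤) {N R : ℝ} (hN : 16 ≤ N) (hNR : N ≤ R) :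
    ‖∫ w in {w : ℂ | N ≤ ‖w‖ ∧ ‖w‖ < R}, w⁻¹ ∂μ‖
      ≤ (∫⁻ z in S 0, ENNReal.ofReal (7 * (1 + 2*|z.im|) / max |z.im| N) ∂μ
          + ENNReal.ofReal (24 / Real.sqrt N) * μ (S 0)).toReal := by
  have hN3 : (0:ℝ) < N - 3 := by linarith
  have hR3 : (0:ℝ) < R - 3 := by linarith
  set B := {w : ℂ | N ≤ ‖w‖ ∧ ‖w‖ < R} with hBdef
  have hB : MeasurableSet B := by
    have h : B = (fun w : ℂ => ‖w‖) ⁻¹' (Ico N R) := rfl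
    rw [h]
    exact continuous_norm.measurable measurableSet_Ico
  set f : ℂ → ℂ := B.indicator (fun w => w⁻¹) with hfdef
  set AnnN : Set ℂ := {w : ℂ | N - 3 ≤ ‖w‖ ∧ ‖w‖ ≤ N + 3} with hAnnN
  set AnnR : Set ℂ := {w : ℂ | R - 3 ≤ ‖w‖ ∧ ‖w‖ ≤ R + 3} with hAnnR
  have hAnnNMeas : MeasurableSet AnnN :=
    continuous_norm.measurable (measurableSet_Icc (a := N - 3) (b := N + 3))
  have hAnnRMeas : MeasurableSet AnnR :=
    continuous_norm.measurable (measurableSet_Icc (a := R - 3) (b := R + 3))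
  set G : ℂ → ℝ≥0∞ := fun w =>
    ENNReal.ofReal ((1 + 2*|w.im|) / (max (|w.re| - 1) (max |w.im| N))^2) with hGdef
  set M1 : ℂ → ℝ≥0∞ := AnnN.indicator (fun _ => ENNReal.ofReal (1/(N-3))) with hM1def
  set M2 : ℂ → ℝ≥0∞ := AnnR.indicator (fun _ => ENNReal.ofReal (1/(R-3))) with hM2def
  -- pointwise bound
  have hpt : ∀ w : ℂ, ENNReal.ofReal ‖f w + f (σ w)‖ ≤ G w + M1 w + M2 w := by
    intro w
    by_cases hw : w ∈ B <;> by_cases hsw : σ w ∈ B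
    · -- both in B
      simp only [hfdef]
      rw [Set.indicator_of_mem hw, Set.indicator_of_mem hsw]
      have hwa : N ≤ ‖w‖ := hw.1
      have hswa : N ≤ ‖σ w‖ := hsw.1
      have hw0 : w ≠ 0 := by
        intro h
        rw [h] at hwa
        simp at hwa
        linarith
      have hsw0 : σ w ≠ 0 := by
        intro h
        rw [h] at hswa
        simp at hswa
        linarith
      set D := max (|w.re| - 1) (max |w.im| N) with hD
      have hDN : N ≤ D := le_trans (le_max_right _ _) (le_max_right _ _)
      have hD0 : (0:ℝ) < D := by linarith
      have hwD : D ≤ ‖w‖ := by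
        apply max_le
        · linarith [Complex.abs_re_le_norm w, le_abs_self w.re]
        · exact max_le (Complex.abs_im_le_norm w) hwa
      have hswD : D ≤ ‖σ w‖ := by
        apply max_le
        · linarith [Complex.abs_re_le_norm (σ w), (abs_σ_re_bounds w).1]
        · refine max_le ?_ hswa
          have := Complex.abs_im_le_norm (σ w)
          rw [σ_im] at this
          exact this
      have hkey : w⁻¹ + (σ w)⁻¹ = (w + σ w) / (w * σ w) := by
        field_simp
        ring
      have hnum : ‖w + σ w‖ ≤ 1 + 2*|w.im| := by
        calc ‖w + σ w‖ ≤ |(w + σ w).re| + |(w + σ w).im| :=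
              Complex.norm_le_abs_re_add_abs_im _
          _ ≤ 1 + 2*|w.im| := by
              have hre1 : (w + σ w).re = 2*w.re - (2*(⌊w.re⌋:ℝ) + 1) := by
                rw [Complex.add_re, σ_re]
                ring
              have him1 : (w + σ w).im = 2*w.im := by
                rw [Complex.add_im, σ_im]
                ring
              rw [hre1, him1]
              have hfl1 : (⌊w.re⌋:ℝ) ≤ w.re := Int.floor_le _
              have hfl2 : w.re < (⌊w.re⌋:ℝ) + 1 := Int.lt_floor_add_one _
              have h1 : |2*w.re - (2*(⌊w.re⌋:ℝ) + 1)| ≤ 1 := by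
                rw [abs_le]
                constructor <;> linarith
              have h2 : |2*w.im| = 2*|w.im| := by
                rw [abs_mul]
                norm_num
              linarith
      have hnorm : ‖w⁻¹ + (σ w)⁻¹‖ ≤ (1 + 2*|w.im|) / D^2 := by
        rw [hkey, norm_div, norm_mul]
        apply div_le_div₀ (by positivity) hnum (by positivity)
        rw [sq]
        exact mul_le_mul hwD hswD (le_of_lt hD0) (norm_nonneg _)
      calc ENNReal.ofReal ‖w⁻¹ + (σ w)⁻¹‖ ≤ G w := ENNReal.ofReal_le_ofReal hnorm
        _ ≤ G w + M1 w := le_self_add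
        _ ≤ G w + M1 w + M2 w := le_self_add
    · -- w ∈ B, σ w ∉ B
      simp only [hfdef]
      rw [Set.indicator_of_mem hw, Set.indicator_of_notMem hsw, add_zero, norm_inv]
      have hwa : N ≤ ‖w‖ := hw.1
      have hw1 : 1 ≤ ‖w‖ := by linarith
      have habs3 := abs_σ_bounds hw1
      have hle : ∀ c : ℝ, 0 < c → c ≤ ‖w‖ →
          ENNReal.ofReal (‖w‖)⁻¹ ≤ ENNReal.ofReal (1/c) := by
        intro c hc hcw
        apply ENNReal.ofReal_le_ofReal
        rw [inv_eq_one_div]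
        exact one_div_le_one_div_of_le hc hcw
      rcases not_and_or.1 hsw with h | h
      · push_neg at h
        have hmem : w ∈ AnnN := ⟨by linarith, by linarith [habs3.1]⟩
        have : M1 w = ENNReal.ofReal (1/(N-3)) := by
          rw [hM1def]; exact Set.indicator_of_mem hmem _
        calc ENNReal.ofReal (‖w‖)⁻¹ ≤ ENNReal.ofReal (1/(N-3)) :=
              hle (N-3) hN3 (by linarith)
          _ = M1 w := this.symm
          _ ≤ G w + M1 w := le_add_self
          _ ≤ G w + M1 w + M2 w := le_self_add
      · push_neg at h
        have hmem : w ∈ AnnR := ⟨by linarith [habs3.2], by linarith [hw.2]⟩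
        have : M2 w = ENNReal.ofReal (1/(R-3)) := by
          rw [hM2def]; exact Set.indicator_of_mem hmem _
        calc ENNReal.ofReal (‖w‖)⁻¹ ≤ ENNReal.ofReal (1/(R-3)) :=
              hle (R-3) hR3 (by linarith [habs3.2])
          _ = M2 w := this.symm
          _ ≤ G w + M1 w + M2 w := le_add_self
    · -- w ∉ B, σ w ∈ B
      simp only [hfdef]
      rw [Set.indicator_of_notMem hw, Set.indicator_of_mem hsw, zero_add, norm_inv]
      have hswa : N ≤ ‖σ w‖ := hsw.1
      have hsw1 : 1 ≤ ‖σ w‖ := by linarith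
      have habs3 := abs_σ_bounds hsw1
      rw [σ_σ] at habs3
      have hle : ∀ c : ℝ, 0 < c → c ≤ ‖σ w‖ →
          ENNReal.ofReal (‖σ w‖)⁻¹ ≤ ENNReal.ofReal (1/c) := by
        intro c hc hcw
        apply ENNReal.ofReal_le_ofReal
        rw [inv_eq_one_div]
        exact one_div_le_one_div_of_le hc hcw
      rcases not_and_or.1 hw with h | h
      · push_neg at h
        have hmem : w ∈ AnnN := ⟨by linarith [habs3.1], by linarith⟩
        have : M1 w = ENNReal.ofReal (1/(N-3)) := by
          rw [hM1def]; exact Set.indicator_of_mem hmem _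
        calc ENNReal.ofReal (‖σ w‖)⁻¹ ≤ ENNReal.ofReal (1/(N-3)) :=
              hle (N-3) hN3 (by linarith)
          _ = M1 w := this.symm
          _ ≤ G w + M1 w := le_add_self
          _ ≤ G w + M1 w + M2 w := le_self_add
      · push_neg at h
        have hmem : w ∈ AnnR := ⟨by linarith, by linarith [habs3.2, hsw.2]⟩
        have : M2 w = ENNReal.ofReal (1/(R-3)) := by
          rw [hM2def]; exact Set.indicator_of_mem hmem _
        calc ENNReal.ofReal (‖σ w‖)⁻¹ ≤ ENNReal.ofReal (1/(R-3)) :=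
              hle (R-3) hR3 (by linarith [habs3.2])
          _ = M2 w := this.symm
          _ ≤ G w + M1 w + M2 w := le_add_self
    · -- neither
      simp only [hfdef]
      rw [Set.indicator_of_notMem hw, Set.indicator_of_notMem hsw]
      simp
  -- measurability
  have hGmeas : Measurable G := by
    apply Measurable.ennreal_ofReal
    apply Measurable.div
    · exact ((Complex.measurable_im.abs.const_mul 2).const_add 1)
    · exact ((Complex.measurable_re.abs.sub measurable_const).max
        (Complex.measurable_im.abs.max measurable_const)).pow_const 2
  have hM1meas : Measurable M1 := measurable_const.indicator hAnnNMeas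
  have hM2meas : Measurable M2 := measurable_const.indicator hAnnRMeas
  -- integrability
  have hBsub : B ⊆ {w : ℂ | 1 ≤ ‖w‖ ∧ ‖w‖ ≤ R} :=
    fun w hw => ⟨by linarith [hw.1], le_of_lt hw.2⟩
  have hIntOn : IntegrableOn (fun w : ℂ => w⁻¹) B μ := integrableOn_inv hinv hfin hB hBsub
  have hInt : Integrable f μ := (integrable_indicator_iff hB).2 hIntOn
  have mp : MeasurePreserving σ μ μ := ⟨measurable_σ, map_σ hinv⟩
  have hIntσ : Integrable (fun w => f (σ w)) μ :=
    (mp.integrable_comp_emb σEquiv.measurableEmbedding).2 hInt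
  have hIeq : ∫ w in B, w⁻¹ ∂μ = ∫ w, f w ∂μ := (integral_indicator hB).symm
  have hcomp : ∫ w, f (σ w) ∂μ = ∫ w, f w ∂μ := mp.integral_comp σEquiv.measurableEmbedding f
  have hsum : ∫ w, (f w + f (σ w)) ∂μ = (∫ w, f w ∂μ) + (∫ w, f w ∂μ) := by
    rw [integral_add hInt hIntσ, hcomp]
  have hnorm1 : ‖∫ w, f w ∂μ‖ ≤ ‖∫ w, (f w + f (σ w)) ∂μ‖ := by
    rw [hsum]
    have h2 : (∫ w, f w ∂μ) + (∫ w, f w ∂μ) = (2:ℝ) • ∫ w, f w ∂μ := (two_smul ℝ _).symm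
    rw [h2, norm_smul]
    have h3 : ‖(2:ℝ)‖ = 2 := by norm_num
    rw [h3]
    linarith [norm_nonneg (∫ w, f w ∂μ)]
  have hnorm2 : ‖∫ w, (f w + f (σ w)) ∂μ‖
      ≤ (∫⁻ w, ENNReal.ofReal ‖f w + f (σ w)‖ ∂μ).toReal :=
    norm_integral_le_lintegral_norm _
  -- lintegral bounds
  have hlin1 : ∫⁻ w, ENNReal.ofReal ‖f w + f (σ w)‖ ∂μ ≤ ∫⁻ w, (G w + M1 w + M2 w) ∂μ :=
    lintegral_mono hpt
  have hadd : ∫⁻ w, (G w + M1 w + M2 w) ∂μ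
      = ∫⁻ w, G w ∂μ + ∫⁻ w, M1 w ∂μ + ∫⁻ w, M2 w ∂μ := by
    rw [lintegral_add_right _ hM2meas, lintegral_add_right _ hM1meas]
  -- G bound
  have hΦmeas : Measurable fun z : ℂ => ENNReal.ofReal (7 * (1 + 2*|z.im|) / max |z.im| N) := by
    apply Measurable.ennreal_ofReal
    apply Measurable.div
    · exact ((Complex.measurable_im.abs.const_mul 2).const_add 1).const_mul 7
    · exact Complex.measurable_im.abs.max measurable_const
  have hGbound : ∫⁻ w, G w ∂μ
      ≤ ∫⁻ z in S 0, ENNReal.ofReal (7 * (1 + 2*|z.im|) / max |z.im| N) ∂μ := by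
    rw [lintegral_wrap hinv G hGmeas]
    apply setLIntegral_mono hΦmeas
    intro z hz
    have hz0 : ((0:ℤ):ℝ) ≤ z.re ∧ z.re < ((0:ℤ):ℝ) + 1 := hz
    have hz1 : 0 ≤ z.re := by exact_mod_cast hz0.1
    have hz2 : z.re < 1 := by
      have := hz0.2
      push_cast at this
      linarith
    set y := z.im with hy
    set M' := max |y| N with hM'
    have hM'16 : 16 ≤ M' := le_trans hN (le_max_right _ _)
    have hM'0 : (0:ℝ) < M' := by linarith
    have hynn : (0:ℝ) ≤ 1 + 2*|y| := by positivity
    have hstep : ∀ n : ℤ, G (z + (n:ℂ))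
        ≤ ENNReal.ofReal ((1 + 2*|y|) * (1 / (max (|(n:ℝ)| - 2) M')^2)) := by
      intro n
      simp only [hGdef]
      rw [Complex.add_im, Complex.add_re, Complex.intCast_im, Complex.intCast_re, add_zero]
      apply ENNReal.ofReal_le_ofReal
      rw [div_eq_mul_one_div]
      apply mul_le_mul_of_nonneg_left _ hynn
      have hmax : max (|(n:ℝ)| - 2) M' ≤ max (|z.re + (n:ℝ)| - 1) (max |y| N) := by
        apply max_le_max_right _
        have habs : |(n:ℝ)| ≤ |z.re + (n:ℝ)| + |z.re| := by
          calc |(n:ℝ)| = |(z.re + (n:ℝ)) + (-z.re)| := by congr 1; ring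
            _ ≤ |z.re + (n:ℝ)| + |(-z.re)| := abs_add_le _ _
            _ = |z.re + (n:ℝ)| + |z.re| := by rw [abs_neg]
        have hzre : |z.re| ≤ 1 := by
          rw [abs_of_nonneg hz1]
          linarith
        linarith
      apply one_div_le_one_div_of_le (by positivity)
      have h1 : (0:ℝ) < max (|(n:ℝ)| - 2) M' := lt_of_lt_of_le hM'0 (le_max_right _ _)
      nlinarith
    calc ∑' n : ℤ, G (z + (n:ℂ))
        ≤ ∑' n : ℤ, ENNReal.ofReal ((1 + 2*|y|) * (1 / (max (|(n:ℝ)| - 2) M')^2)) :=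
          ENNReal.tsum_le_tsum hstep
      _ ≤ ENNReal.ofReal ((1 + 2*|y|) * (7 / M')) := by
          apply tsum_ofReal_le
          · intro n
            positivity
          · intro s
            rw [← Finset.mul_sum]
            exact mul_le_mul_of_nonneg_left (sum_int_bound hM'16 s) hynn
      _ = ENNReal.ofReal (7 * (1 + 2*|y|) / M') := by
          congr 1
          ring
  -- annulus bounds
  have hannbound : ∀ (t : ℝ), 16 ≤ t →
      ∫⁻ w, (({w : ℂ | t - 3 ≤ ‖w‖ ∧ ‖w‖ ≤ t + 3}).indicator
        (fun _ => ENNReal.ofReal (1/(t-3)))) w ∂μ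
      ≤ ENNReal.ofReal (12 / Real.sqrt t) * μ (S 0) := by
    intro t ht
    have ht3 : (0:ℝ) < t - 3 := by linarith
    have hst : (0:ℝ) < Real.sqrt t := Real.sqrt_pos.2 (by linarith)
    have hmeas : Measurable (({w : ℂ | t - 3 ≤ ‖w‖ ∧ ‖w‖ ≤ t + 3}).indicator
        (fun _ : ℂ => ENNReal.ofReal (1/(t-3)))) :=
      measurable_const.indicator
        (continuous_norm.measurable (measurableSet_Icc (a := t - 3) (b := t + 3)))
    rw [lintegral_wrap hinv _ hmeas]
    have hpt1 : ∀ z : ℂ, ∑' n : ℤ,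
        (({w : ℂ | t - 3 ≤ ‖w‖ ∧ ‖w‖ ≤ t + 3}).indicator
          (fun _ => ENNReal.ofReal (1/(t-3)))) (z + (n:ℂ))
        ≤ ENNReal.ofReal (12 / Real.sqrt t) := by
      intro z
      have heq : ∀ n : ℤ,
          (({w : ℂ | t - 3 ≤ ‖w‖ ∧ ‖w‖ ≤ t + 3}).indicator
            (fun _ => ENNReal.ofReal (1/(t-3)))) (z + (n:ℂ))
          = ENNReal.ofReal (1/(t-3)) *
            (({w : ℂ | t - 3 ≤ ‖w‖ ∧ ‖w‖ ≤ t + 3}).indicator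
              (fun _ => (1:ℝ≥0∞))) (z + (n:ℂ)) := by
        intro n
        by_cases h : (z + (n:ℂ)) ∈ {w : ℂ | t - 3 ≤ ‖w‖ ∧ ‖w‖ ≤ t + 3}
        · rw [Set.indicator_of_mem h, Set.indicator_of_mem h, mul_one]
        · rw [Set.indicator_of_notMem h, Set.indicator_of_notMem h, mul_zero]
      rw [tsum_congr heq, ENNReal.tsum_mul_left]
      calc ENNReal.ofReal (1/(t-3)) * ∑' n : ℤ,
            (({w : ℂ | t - 3 ≤ ‖w‖ ∧ ‖w‖ ≤ t + 3}).indicator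
              (fun _ => (1:ℝ≥0∞))) (z + (n:ℂ))
          ≤ ENNReal.ofReal (1/(t-3)) * ENNReal.ofReal (9 * Real.sqrt t) :=
            mul_le_mul_right (count_annulus z ht) _
        _ = ENNReal.ofReal ((1/(t-3)) * (9 * Real.sqrt t)) := by
            rw [← ENNReal.ofReal_mul (by positivity)]
        _ ≤ ENNReal.ofReal (12 / Real.sqrt t) := by
            apply ENNReal.ofReal_le_ofReal
            have hts : Real.sqrt t * Real.sqrt t = t := Real.mul_self_sqrt (by linarith)
            have heq2 : 1/(t-3) * (9 * Real.sqrt t) = (9 * Real.sqrt t)/(t-3) := by ring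
            rw [heq2, div_le_div_iff₀ ht3 hst]
            nlinarith
    calc ∫⁻ z in S 0, (∑' n : ℤ,
          (({w : ℂ | t - 3 ≤ ‖w‖ ∧ ‖w‖ ≤ t + 3}).indicator
            (fun _ => ENNReal.ofReal (1/(t-3)))) (z + (n:ℂ))) ∂μ
        ≤ ∫⁻ _z in S 0, ENNReal.ofReal (12 / Real.sqrt t) ∂μ :=
          setLIntegral_mono measurable_const fun z _ => hpt1 z
      _ = ENNReal.ofReal (12 / Real.sqrt t) * μ (S 0) := setLIntegral_const _ _
  have hM1bound : ∫⁻ w, M1 w ∂μ ≤ ENNReal.ofReal (12 / Real.sqrt N) * μ (S 0) :=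
    hannbound N hN
  have hM2bound : ∫⁻ w, M2 w ∂μ ≤ ENNReal.ofReal (12 / Real.sqrt N) * μ (S 0) := by
    refine le_trans (hannbound R (le_trans hN hNR)) ?_
    apply mul_le_mul_left
    apply ENNReal.ofReal_le_ofReal
    have h1 : Real.sqrt N ≤ Real.sqrt R := Real.sqrt_le_sqrt hNR
    have h2 : (0:ℝ) < Real.sqrt N := Real.sqrt_pos.2 (by linarith)
    exact div_le_div_of_nonneg_left (by norm_num) h2 h1
  -- assemble
  set Φint := ∫⁻ z in S 0, ENNReal.ofReal (7 * (1 + 2*|z.im|) / max |z.im| N) ∂μ with hΦint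
  have htotal : ∫⁻ w, ENNReal.ofReal ‖f w + f (σ w)‖ ∂μ
      ≤ Φint + ENNReal.ofReal (24 / Real.sqrt N) * μ (S 0) := by
    refine le_trans hlin1 ?_
    rw [hadd]
    have hco : ENNReal.ofReal (12 / Real.sqrt N) * μ (S 0)
        + ENNReal.ofReal (12 / Real.sqrt N) * μ (S 0)
        = ENNReal.ofReal (24 / Real.sqrt N) * μ (S 0) := by
      rw [← add_mul, ← ENNReal.ofReal_add (by positivity) (by positivity)]
      congr 2
      ring
    calc ∫⁻ w, G w ∂μ + ∫⁻ w, M1 w ∂μ + ∫⁻ w, M2 w ∂μ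
        ≤ Φint + ENNReal.ofReal (12 / Real.sqrt N) * μ (S 0)
          + ENNReal.ofReal (12 / Real.sqrt N) * μ (S 0) :=
          add_le_add (add_le_add hGbound hM1bound) hM2bound
      _ = Φint + ENNReal.ofReal (24 / Real.sqrt N) * μ (S 0) := by
          rw [add_assoc, hco]
  have hΦfin : Φint ≠ ⊤ := by
    apply ne_top_of_le_ne_top _ (le_trans (setLIntegral_mono measurable_const ?_)
      (le_of_eq (setLIntegral_const _ (ENNReal.ofReal 15))))
    · exact ENNReal.mul_ne_top ENNReal.ofReal_ne_top hfin
    · intro z _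
      apply ENNReal.ofReal_le_ofReal
      have h1 : (0:ℝ) ≤ |z.im| := abs_nonneg _
      have h2 : 16 ≤ max |z.im| N := le_trans hN (le_max_right _ _)
      have h3 : |z.im| ≤ max |z.im| N := le_max_left _ _
      rw [div_le_iff₀ (by linarith)]
      nlinarith
  have hbound_ne : Φint + ENNReal.ofReal (24 / Real.sqrt N) * μ (S 0) ≠ ⊤ :=
    ENNReal.add_ne_top.2 ⟨hΦfin, ENNReal.mul_ne_top ENNReal.ofReal_ne_top hfin⟩
  calc ‖∫ w in B, w⁻¹ ∂μ‖ = ‖∫ w, f w ∂μ‖ := by rw [hIeq]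
    _ ≤ ‖∫ w, (f w + f (σ w)) ∂μ‖ := hnorm1
    _ ≤ (∫⁻ w, ENNReal.ofReal ‖f w + f (σ w)‖ ∂μ).toReal := hnorm2
    _ ≤ (Φint + ENNReal.ofReal (24 / Real.sqrt N) * μ (S 0)).toReal :=
        ENNReal.toReal_mono hbound_ne htotal

end Stmt15

open Stmt15 in
/-- For a measure `μ` on `ℂ` invariant under translation by `1` and finite on the
fundamental strip, the limit `lim_{R→∞} ∫_{1 ≤ |w| < R} dμ(w)/w` exists. -/
theorem stmt15 (μ : Measure ℂ) (hinv : Measure.map (fun z : ℂ => z + 1) μ = μ)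
    (hfin : μ {z : ℂ | 0 ≤ z.re ∧ z.re < 1} ≠ ⊤) :
    ∃ L : ℂ, Tendsto
      (fun R : ℝ => ∫ w in {w : ℂ | 1 ≤ ‖w‖ ∧ ‖w‖ < R}, w⁻¹ ∂μ)
      atTop (nhds L) := by
  have hS0 : μ (S 0) ≠ ⊤ := by
    have h : S 0 = {z : ℂ | 0 ≤ z.re ∧ z.re < 1} := by
      ext z
      simp [S]
    rw [h]
    exact hfin
  set I : ℝ → ℂ :=
    fun R => ∫ w in {w : ℂ | 1 ≤ ‖w‖ ∧ ‖w‖ < R}, w⁻¹ ∂μ with hI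
  apply cauchySeq_tendsto_of_complete
  rw [Metric.cauchySeq_iff']
  intro ε hε
  -- the bounding sequence
  set e1 : ℕ → ℝ≥0∞ := fun k =>
    ∫⁻ z in S 0, ENNReal.ofReal (7 * (1 + 2*|z.im|) / max |z.im| (16 + (k:ℝ))) ∂μ with he1
  set e2 : ℕ → ℝ≥0∞ := fun k =>
    ENNReal.ofReal (24 / Real.sqrt (16 + (k:ℝ))) * μ (S 0) with he2
  have hdenomTend : Tendsto (fun k : ℕ => 16 + (k:ℝ)) atTop atTop :=
    tendsto_atTop_add_const_left _ 16 tendsto_natCast_atTop_atTop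
  have htend1 : Tendsto e1 atTop (nhds 0) := by
    have hdct := MeasureTheory.tendsto_lintegral_of_dominated_convergence
      (μ := μ.restrict (S 0))
      (F := fun k z => ENNReal.ofReal (7 * (1 + 2*|z.im|) / max |z.im| (16 + (k:ℝ))))
      (f := fun _ => 0)
      (bound := fun _ => ENNReal.ofReal 15)
      (fun k => by
        apply Measurable.ennreal_ofReal
        apply Measurable.div
        · exact ((Complex.measurable_im.abs.const_mul 2).const_add 1).const_mul 7
        · exact Complex.measurable_im.abs.max measurable_const)
      (fun k => by
        apply ae_of_all
        intro z
        apply ENNReal.ofReal_le_ofReal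
        have h1 : (0:ℝ) ≤ |z.im| := abs_nonneg _
        have hk : (16:ℝ) ≤ 16 + (k:ℝ) := by
          have : (0:ℝ) ≤ (k:ℝ) := Nat.cast_nonneg k
          linarith
        have h2 : 16 ≤ max |z.im| (16 + (k:ℝ)) := le_trans hk (le_max_right _ _)
        have h3 : |z.im| ≤ max |z.im| (16 + (k:ℝ)) := le_max_left _ _
        rw [div_le_iff₀ (by linarith)]
        nlinarith)
      (by
        rw [MeasureTheory.lintegral_const]
        rw [Measure.restrict_apply_univ]
        exact ENNReal.mul_ne_top ENNReal.ofReal_ne_top hS0)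
      (by
        apply ae_of_all
        intro z
        have hmaxT : Tendsto (fun k : ℕ => max |z.im| (16 + (k:ℝ))) atTop atTop :=
          tendsto_atTop_mono (fun k => le_max_right _ _) hdenomTend
        have hreal : Tendsto (fun k : ℕ => 7 * (1 + 2*|z.im|) / max |z.im| (16 + (k:ℝ)))
            atTop (nhds 0) := Tendsto.div_atTop tendsto_const_nhds hmaxT
        have := ENNReal.tendsto_ofReal hreal
        rwa [ENNReal.ofReal_zero] at this)
    simpa using hdct
  have htend2 : Tendsto e2 atTop (nhds 0) := by
    have hsqrtT : Tendsto (fun k : ℕ => Real.sqrt (16 + (k:ℝ))) atTop atTop := by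
      apply tendsto_atTop_atTop.2
      intro b
      refine ⟨⌈b^2⌉₊, fun k hk => ?_⟩
      have hk0 : (0:ℝ) ≤ (k:ℝ) := Nat.cast_nonneg k
      have h1 : b^2 ≤ (k:ℝ) := le_trans (Nat.le_ceil _) (by exact_mod_cast hk)
      have h2 : b ≤ Real.sqrt (k:ℝ) := by
        rcases le_or_gt b 0 with hb | hb
        · exact le_trans hb (Real.sqrt_nonneg _)
        · calc b = Real.sqrt (b^2) := (Real.sqrt_sq hb.le).symm
            _ ≤ Real.sqrt (k:ℝ) := Real.sqrt_le_sqrt h1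
      calc b ≤ Real.sqrt (k:ℝ) := h2
        _ ≤ Real.sqrt (16 + (k:ℝ)) := Real.sqrt_le_sqrt (by linarith)
    have hreal : Tendsto (fun k : ℕ => 24 / Real.sqrt (16 + (k:ℝ))) atTop (nhds 0) :=
      Tendsto.div_atTop tendsto_const_nhds hsqrtT
    have h1 := ENNReal.tendsto_ofReal hreal
    rw [ENNReal.ofReal_zero] at h1
    have h2 := ENNReal.Tendsto.mul_const h1 (Or.inr hS0)
    rwa [zero_mul] at h2
  have htend : Tendsto (fun k => e1 k + e2 k) atTop (nhds 0) := by
    have := htend1.add htend2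
    rwa [add_zero] at this
  have hev : ∀ᶠ k in atTop, e1 k + e2 k < ENNReal.ofReal ε :=
    htend.eventually_lt_const (ENNReal.ofReal_pos.2 hε)
  obtain ⟨k, hk⟩ := hev.exists
  refine ⟨16 + (k:ℝ), fun R hR => ?_⟩
  have hk16 : (16:ℝ) ≤ 16 + (k:ℝ) := by
    have : (0:ℝ) ≤ (k:ℝ) := Nat.cast_nonneg k
    linarith
  set N : ℝ := 16 + (k:ℝ) with hNdef
  -- identify the difference of integrals
  have hAmeas : ∀ t : ℝ, MeasurableSet {w : ℂ | 1 ≤ ‖w‖ ∧ ‖w‖ < t} := by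
    intro t
    exact continuous_norm.measurable (measurableSet_Ico (a := (1:ℝ)) (b := t))
  have hsub : {w : ℂ | 1 ≤ ‖w‖ ∧ ‖w‖ < N}
      ⊆ {w : ℂ | 1 ≤ ‖w‖ ∧ ‖w‖ < R} :=
    fun w hw => ⟨hw.1, lt_of_lt_of_le hw.2 hR⟩
  have hIntR : IntegrableOn (fun w : ℂ => w⁻¹)
      {w : ℂ | 1 ≤ ‖w‖ ∧ ‖w‖ < R} μ :=
    integrableOn_inv hinv hS0 (hAmeas R) (fun w hw => ⟨hw.1, le_of_lt hw.2⟩)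
  have hdiffset : {w : ℂ | 1 ≤ ‖w‖ ∧ ‖w‖ < R}
      \ {w : ℂ | 1 ≤ ‖w‖ ∧ ‖w‖ < N}
      = {w : ℂ | N ≤ ‖w‖ ∧ ‖w‖ < R} := by
    ext w
    simp only [Set.mem_diff, Set.mem_setOf_eq, not_and, not_lt]
    constructor
    · rintro ⟨⟨h1, h2⟩, h3⟩
      exact ⟨h3 h1, h2⟩
    · rintro ⟨h1, h2⟩
      exact ⟨⟨by linarith, h2⟩, fun _ => h1⟩
  have hdiff : I R - I N = ∫ w in {w : ℂ | N ≤ ‖w‖ ∧ ‖w‖ < R}, w⁻¹ ∂μ := by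
    rw [← hdiffset, MeasureTheory.integral_diff (hAmeas N) hIntR hsub]
  rw [dist_eq_norm, hdiff]
  have hmain := main_estimate hinv hS0 hk16 hR
  apply lt_of_le_of_lt hmain
  have hne : e1 k + e2 k ≠ ⊤ := ne_top_of_lt (lt_of_lt_of_le hk le_top)
  have := (ENNReal.lt_ofReal_iff_toReal_lt hne).1 hk
  exact this
end

section
/- Let h be a harmonic function on ℂ with h(z) ≤ A(1 + |z|) for all z (some constant A) and sup_{x ∈ ℝ} h(x) < ∞. Then h(z) = a + b·Im z for some real constants a, b. -/
open Real Filter MeasureTheory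

/-- A real-valued function on `ℂ` is harmonic if it is continuous and satisfies
the circle mean-value property. -/
def HarmonicPlane (h : ℂ → ℝ) : Prop :=
  Continuous h ∧
    ∀ c : ℂ, ∀ r : ℝ, 0 < r →
      h c = (2 * π)⁻¹ * ∫ θ in (0:ℝ)..(2 * π), h (c + r * Complex.exp (θ * Complex.I))

lemma symm_eq (r θ : ℝ) : Complex.polarCoord.symm (r, θ) = r * Complex.exp (θ * Complex.I) := by
  rw [Complex.polarCoord_symm_apply, Complex.exp_mul_I]
  push_cast
  ring

lemma ball_mvp (h : ℂ → ℝ) (hh : HarmonicPlane h) (c : ℂ) (R : ℝ) (hR : 0 < R) :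
    ∫ z in Metric.ball c R, h z = π * R ^ 2 * h c := by
  obtain ⟨hcont, hmvp⟩ := hh
  have key := Complex.integral_comp_polarCoord_symm
    (fun z => (Metric.ball (0:ℂ) R).indicator (fun w => h (c + w)) z)
  -- RHS of key
  have hrhs : (∫ z : ℂ, (Metric.ball (0:ℂ) R).indicator (fun w => h (c + w)) z)
      = ∫ z in Metric.ball c R, h z := by
    rw [integral_indicator measurableSet_ball]
    conv_rhs => rw [← integral_indicator measurableSet_ball,
      ← integral_add_left_eq_self ((Metric.ball c R).indicator h) c]
    conv_lhs => rw [← integral_indicator measurableSet_ball]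
    apply integral_congr_ae
    filter_upwards with w
    by_cases hw : w ∈ Metric.ball (0:ℂ) R
    · rw [Set.indicator_of_mem hw, Set.indicator_of_mem]
      simpa [Metric.mem_ball, dist_eq_norm] using hw
    · rw [Set.indicator_of_notMem hw, Set.indicator_of_notMem]
      simpa [Metric.mem_ball, dist_eq_norm] using hw
  -- LHS of key
  set g : ℝ × ℝ → ℝ := fun p => p.1 * h (c + Complex.polarCoord.symm p) with hg
  have hgcont : Continuous g := by
    simp only [hg, Complex.polarCoord_symm_apply]
    fun_prop
  have hlhs : (∫ p in polarCoord.target,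
      p.1 • (Metric.ball (0:ℂ) R).indicator (fun w => h (c + w)) (Complex.polarCoord.symm p))
      = ∫ p in Set.Ioo 0 R ×ˢ Set.Ioo (-π) π, g p := by
    have hsub : Set.Ioo (0:ℝ) R ×ˢ Set.Ioo (-π) π ⊆ polarCoord.target := by
      rw [polarCoord_target]
      exact fun p hp => ⟨hp.1.1, hp.2⟩
    rw [setIntegral_congr_fun polarCoord.open_target.measurableSet
      (g := fun p => (Set.Ioo 0 R ×ˢ Set.Ioo (-π) π).indicator g p)]
    · rw [setIntegral_indicator (by measurability), Set.inter_eq_self_of_subset_right hsub]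
    · intro p hp
      rw [polarCoord_target] at hp
      obtain ⟨hp1, hp2⟩ := hp
      have hp1' : (0:ℝ) < p.1 := hp1
      dsimp only
      have hmem : Complex.polarCoord.symm p ∈ Metric.ball (0:ℂ) R ↔ p.1 < R := by
        simp only [Metric.mem_ball, dist_zero_right]
        rw [Complex.norm_polarCoord_symm, abs_of_pos hp1']
      by_cases hpr : p.1 < R
      · rw [Set.indicator_of_mem (hmem.2 hpr), Set.indicator_of_mem (show p ∈ Set.Ioo 0 R ×ˢ Set.Ioo (-π) π from ⟨⟨hp1', hpr⟩, hp2⟩)]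
        simp [hg]
      · rw [Set.indicator_of_notMem (fun hm => hpr (hmem.1 hm)),
          Set.indicator_of_notMem (by simp [hpr])]
        simp
  -- Fubini
  have hint : IntegrableOn g (Set.Ioo 0 R ×ˢ Set.Ioo (-π) π) := by
    apply (hgcont.continuousOn.integrableOn_compact
      (IsCompact.prod isCompact_Icc isCompact_Icc : IsCompact (Set.Icc 0 R ×ˢ Set.Icc (-π) π))).mono_set
    exact Set.prod_mono Set.Ioo_subset_Icc_self Set.Ioo_subset_Icc_self
  have hfub : ∫ p in Set.Ioo 0 R ×ˢ Set.Ioo (-π) π, g p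
      = ∫ r in Set.Ioo (0:ℝ) R, ∫ θ in Set.Ioo (-π) π, g (r, θ) := by
    rw [← setIntegral_prod]
    · rw [← Measure.volume_eq_prod]
    · rw [← Measure.volume_eq_prod]; exact hint
  -- inner integral
  have hinner : ∀ r ∈ Set.Ioo (0:ℝ) R, (∫ θ in Set.Ioo (-π) π, g (r, θ)) = r * (2 * π * h c) := by
    intro r hr
    have h1 : (∫ θ in Set.Ioo (-π) π, g (r, θ))
        = r * ∫ θ in (-π)..π, h (c + r * Complex.exp (θ * Complex.I)) := by
      calc (∫ θ in Set.Ioo (-π) π, g (r, θ))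
          = ∫ θ in Set.Ioo (-π) π, r * h (c + r * Complex.exp (θ * Complex.I)) := by
            apply setIntegral_congr_fun measurableSet_Ioo
            intro θ _
            simp [hg, Complex.exp_mul_I, Complex.polarCoord_symm_apply]
        _ = r * ∫ θ in Set.Ioo (-π) π, h (c + r * Complex.exp (θ * Complex.I)) :=
            integral_const_mul r _
        _ = r * ∫ θ in (-π)..π, h (c + r * Complex.exp (θ * Complex.I)) := by
            rw [intervalIntegral.integral_of_le (by linarith [pi_pos]),
              MeasureTheory.integral_Ioc_eq_integral_Ioo]
    have hper : Function.Periodic (fun θ : ℝ => h (c + r * Complex.exp (θ * Complex.I))) (2 * π) := by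
      intro θ
      have e : Complex.exp (((θ:ℂ) + 2 * (π:ℂ)) * Complex.I) = Complex.exp ((θ:ℂ) * Complex.I) := by
        rw [add_mul, Complex.exp_add, Complex.exp_two_pi_mul_I, mul_one]
      simp [e]
    have h2 : (∫ θ in (-π)..π, h (c + r * Complex.exp (θ * Complex.I)))
        = ∫ θ in (0:ℝ)..2 * π, h (c + r * Complex.exp (θ * Complex.I)) := by
      have := hper.intervalIntegral_add_eq (-π) 0
      rw [show -π + 2 * π = π by ring, zero_add] at this
      exact this
    rw [h1, h2, hmvp c r hr.1, ← mul_assoc (2 * π), mul_inv_cancel₀ (by positivity : (2:ℝ) * π ≠ 0),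
      one_mul]
  -- outer integral
  have houter : (∫ r in Set.Ioo (0:ℝ) R, ∫ θ in Set.Ioo (-π) π, g (r, θ)) = π * R ^ 2 * h c := by
    rw [setIntegral_congr_fun measurableSet_Ioo hinner]
    rw [← MeasureTheory.integral_Ioc_eq_integral_Ioo,
      ← intervalIntegral.integral_of_le (le_of_lt hR)]
    rw [intervalIntegral.integral_mul_const]
    rw [integral_id]
    ring
  rw [hrhs, hlhs, hfub, houter] at key
  linarith [key]

lemma vol_ball_toReal (c : ℂ) (r : ℝ) (hr : 0 ≤ r) :
    (volume (Metric.ball c r)).toReal = π * r ^ 2 := by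
  rw [Complex.volume_ball, ENNReal.toReal_mul, ENNReal.toReal_pow, ENNReal.toReal_ofReal hr]
  simp [mul_comm, NNReal.coe_real_pi]

lemma diff_le (h : ℂ → ℝ) (hh : HarmonicPlane h) (c₁ c₂ : ℂ) (R M : ℝ) (hR : 0 < R)
    (hM : ∀ z ∈ Metric.closedBall c₁ (R + dist c₁ c₂), h z ≤ M) :
    π * R ^ 2 * (h c₁ - h c₂) ≤ π * ((R + dist c₁ c₂) ^ 2 - R ^ 2) * (M - h c₁) := by
  have hcont := hh.1
  set d : ℝ := dist c₁ c₂ with hd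
  have hd0 : 0 ≤ d := dist_nonneg
  have hsub : Metric.ball c₂ R ⊆ Metric.ball c₁ (R + d) := by
    intro z hz
    rw [Metric.mem_ball] at hz ⊢
    calc dist z c₁ ≤ dist z c₂ + dist c₂ c₁ := dist_triangle _ _ _
      _ < R + d := by rw [dist_comm c₂ c₁]; linarith
  have hint : IntegrableOn h (Metric.ball c₁ (R + d)) :=
    ((hcont.continuousOn).integrableOn_compact (isCompact_closedBall c₁ (R + d))).mono_set
      Metric.ball_subset_closedBall
  have e1 := ball_mvp h hh c₁ R hR
  have e2 := ball_mvp h hh c₁ (R + d) (by linarith)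
  have e3 := ball_mvp h hh c₂ R hR
  have e4 : (∫ z in Metric.ball c₁ (R + d) \ Metric.ball c₂ R, h z)
      = π * (R + d) ^ 2 * h c₁ - π * R ^ 2 * h c₂ := by
    rw [integral_diff measurableSet_ball hint hsub, e2, e3]
  have hvol : (volume (Metric.ball c₁ (R + d) \ Metric.ball c₂ R)).toReal
      = π * ((R + d) ^ 2 - R ^ 2) := by
    rw [measure_diff hsub measurableSet_ball.nullMeasurableSet (measure_ball_lt_top).ne]
    rw [ENNReal.toReal_sub_of_le (measure_mono hsub) (measure_ball_lt_top).ne]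
    rw [vol_ball_toReal c₁ (R + d) (by linarith), vol_ball_toReal c₂ R (le_of_lt hR)]
    ring
  have e5 : (∫ z in Metric.ball c₁ (R + d) \ Metric.ball c₂ R, h z)
      ≤ π * ((R + d) ^ 2 - R ^ 2) * M := by
    have hle : ∀ z ∈ Metric.ball c₁ (R + d) \ Metric.ball c₂ R, h z ≤ M := fun z hz =>
      hM z (Metric.ball_subset_closedBall hz.1)
    calc (∫ z in Metric.ball c₁ (R + d) \ Metric.ball c₂ R, h z)
        ≤ ∫ _z in Metric.ball c₁ (R + d) \ Metric.ball c₂ R, M := by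
          apply setIntegral_mono_on (hint.mono_set Set.diff_subset)
          · exact (integrableOn_const_iff (C := M)).mpr (Or.inr (lt_of_le_of_lt (measure_mono
              (Set.diff_subset.trans Metric.ball_subset_closedBall))
              (measure_closedBall_lt_top)))
          · exact measurableSet_ball.diff measurableSet_ball
          · exact hle
      _ = π * ((R + d) ^ 2 - R ^ 2) * M := by
          rw [setIntegral_const, smul_eq_mul, measureReal_def, hvol]
  nlinarith [e4, e5]

lemma lipschitz_bound (h : ℂ → ℝ) (hh : HarmonicPlane h) (a b : ℝ) (hb : 0 ≤ b)
    (hab : ∀ z : ℂ, h z ≤ a + b * ‖z‖) (c₁ c₂ : ℂ) :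
    h c₁ - h c₂ ≤ 2 * b * dist c₁ c₂ := by
  set d : ℝ := dist c₁ c₂ with hd
  have hd0 : 0 ≤ d := dist_nonneg
  set K : ℝ := a + b * (‖c₁‖ + d) - h c₁ with hK
  have main : ∀ R : ℝ, 0 < R →
      h c₁ - h c₂ ≤ 2 * b * d + (d ^ 2 * b + 2 * d * K) / R + d ^ 2 * K / R ^ 2 := by
    intro R hR
    set M : ℝ := a + b * (‖c₁‖ + (R + d)) with hM
    have hMb : ∀ z ∈ Metric.closedBall c₁ (R + d), h z ≤ M := by
      intro z hz
      rw [Metric.mem_closedBall] at hz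
      have habs : ‖z‖ ≤ ‖c₁‖ + (R + d) := by
        calc ‖z‖ = ‖c₁ + (z - c₁)‖ := by ring_nf
          _ ≤ ‖c₁‖ + ‖(z - c₁)‖ := norm_add_le _ _
          _ ≤ ‖c₁‖ + (R + d) := by
              rw [Complex.dist_eq] at hz
              linarith
      calc h z ≤ a + b * ‖z‖ := hab z
        _ ≤ M := by rw [hM]; nlinarith
    have key := diff_le h hh c₁ c₂ R M hR hMb
    rw [← hd] at key
    have hident : π * ((R + d) ^ 2 - R ^ 2) * (M - h c₁)
        = π * R ^ 2 * (2 * b * d + (d ^ 2 * b + 2 * d * K) / R + d ^ 2 * K / R ^ 2) := by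
      rw [hM, hK]
      field_simp
      ring
    rw [hident] at key
    have hpos : 0 < π * R ^ 2 := by positivity
    exact le_of_mul_le_mul_left (by linarith [key]) hpos
  have htend : Tendsto (fun R : ℝ => 2 * b * d + (d ^ 2 * b + 2 * d * K) / R + d ^ 2 * K / R ^ 2)
      atTop (nhds (2 * b * d + 0 + 0)) := by
    apply Tendsto.add
    apply Tendsto.add tendsto_const_nhds
    · exact Tendsto.div_atTop tendsto_const_nhds tendsto_id
    · exact Tendsto.div_atTop tendsto_const_nhds (tendsto_pow_atTop two_ne_zero)
  rw [add_zero, add_zero] at htend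
  apply ge_of_tendsto htend
  filter_upwards [eventually_gt_atTop 0] with R hR using main R hR

/-- A harmonic function on `ℂ` with `h(z) ≤ A(1 + |z|)` that is bounded above on
the real axis has the form `h(z) = a + b · Im z`. -/
theorem stmt17 (h : ℂ → ℝ) (hh : HarmonicPlane h) (A : ℝ)
    (hA : ∀ z : ℂ, h z ≤ A * (1 + ‖z‖))
    (hb : BddAbove (Set.range fun x : ℝ => h (x : ℂ))) :
    ∃ a b : ℝ, ∀ z : ℂ, h z = a + b * z.im := by
  obtain ⟨hcont, hmvp⟩ := hh
  set A' : ℝ := max A 0 with hA'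
  have hA'0 : 0 ≤ A' := le_max_right A 0
  have hA'b : ∀ z : ℂ, h z ≤ A' + A' * ‖z‖ := by
    intro z
    have h1 : h z ≤ A * (1 + ‖z‖) := hA z
    have h2 : A * (1 + ‖z‖) ≤ A' * (1 + ‖z‖) := by
      apply mul_le_mul_of_nonneg_right (le_max_left A 0)
      positivity
    nlinarith [h1, h2]
  have hlip : ∀ c₁ c₂ : ℂ, h c₁ - h c₂ ≤ 2 * A' * dist c₁ c₂ := fun c₁ c₂ =>
    lipschitz_bound h ⟨hcont, hmvp⟩ A' A' hA'0 hA'b c₁ c₂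
  -- translated differences are harmonic and bounded
  have hdiff : ∀ v z : ℂ, h (z + v) - h z = h v - h 0 := by
    intro v z
    set g : ℂ → ℝ := fun w => h (w + v) - h w with hgdef
    have hgh : HarmonicPlane g := by
      constructor
      · exact (hcont.comp (continuous_id.add continuous_const)).sub hcont
      · intro c r hr
        have i1 : IntervalIntegrable (fun θ : ℝ => h (c + v + r * Complex.exp (θ * Complex.I)))
            volume 0 (2 * π) := by
          apply Continuous.intervalIntegrable
          fun_prop
        have i2 : IntervalIntegrable (fun θ : ℝ => h (c + r * Complex.exp (θ * Complex.I)))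
            volume 0 (2 * π) := by
          apply Continuous.intervalIntegrable
          fun_prop
        have : g c = (2 * π)⁻¹ * ((∫ θ in (0:ℝ)..2 * π, h (c + v + r * Complex.exp (θ * Complex.I)))
            - ∫ θ in (0:ℝ)..2 * π, h (c + r * Complex.exp (θ * Complex.I))) := by
          rw [hgdef]
          simp only
          rw [hmvp (c + v) r hr, hmvp c r hr]
          ring
        rw [this, ← intervalIntegral.integral_sub i1 i2]
        congr 1
        apply intervalIntegral.integral_congr
        intro θ _
        simp only [hgdef]
        ring_nf
      -- end of MVP for g
    have hgb : ∀ z : ℂ, g z ≤ 2 * A' * ‖v‖ + 0 * ‖z‖ := by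
      intro z
      have := hlip (z + v) z
      have hdist : dist (z + v) z = ‖v‖ := by
        rw [Complex.dist_eq]
        ring_nf
      rw [hdist] at this
      simpa [hgdef] using this
    have h1 : g z - g 0 ≤ 0 := by
      have := lipschitz_bound g hgh (2 * A' * ‖v‖) 0 le_rfl hgb z 0
      simpa using this
    have h2 : g 0 - g z ≤ 0 := by
      have := lipschitz_bound g hgh (2 * A' * ‖v‖) 0 le_rfl hgb 0 z
      simpa using this
    have : g z = g 0 := le_antisymm (by linarith) (by linarith)
    simpa [hgdef] using this
  -- additivity
  set φ : ℂ → ℝ := fun v => h v - h 0 with hφ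
  have hadd : ∀ v w : ℂ, φ (v + w) = φ v + φ w := by
    intro v w
    have := hdiff v w
    simp only [hφ]
    rw [add_comm v w]
    linarith
  set Φ : ℂ →+ ℝ := AddMonoidHom.mk' φ hadd with hΦ
  have hφcont : Continuous φ := hcont.sub continuous_const
  set L : ℂ →L[ℝ] ℝ := Φ.toRealLinearMap hφcont with hL
  have hLφ : ∀ z : ℂ, L z = φ z := fun z => congrFun (Φ.coe_toRealLinearMap hφcont) z
  have hlin : ∀ z : ℂ, L z = z.re * L 1 + z.im * L Complex.I := by
    intro z
    have hz : z = z.re • (1 : ℂ) + z.im • Complex.I := by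
      simp [Complex.real_smul]
    calc L z = L (z.re • (1 : ℂ) + z.im • Complex.I) := by rw [← hz]
      _ = z.re * L 1 + z.im * L Complex.I := by
        rw [map_add, _root_.map_smul, _root_.map_smul]
        simp [smul_eq_mul]
  have hrep : ∀ z : ℂ, h z = h 0 + (z.re * L 1 + z.im * L Complex.I) := by
    intro z
    rw [← hlin z, hLφ z]
    simp [hφ]
  -- kill the real part
  obtain ⟨B, hB⟩ := hb
  have hBle : ∀ x : ℝ, h (x : ℂ) ≤ B := fun x => hB (Set.mem_range_self x)
  have hL1 : L 1 = 0 := by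
    by_contra hne
    have hx := hBle ((B - h 0 + 1) / L 1)
    rw [hrep ((((B - h 0 + 1) / L 1) : ℝ) : ℂ)] at hx
    simp only [Complex.ofReal_re, Complex.ofReal_im, zero_mul, add_zero] at hx
    rw [div_mul_cancel₀ _ hne] at hx
    linarith
  refine ⟨h 0, L Complex.I, fun z => ?_⟩
  rw [hrep z, hL1]
  ring
end
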